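/- arXiv:1704.06472 — 10 statements merged into one kernel-verified Lean document; each statement's English description precedes it below -/
import Mathlib

section
/- For all real numbers x1, x2, ξ1, ξ2, one has |e(x1) + e(x1+ξ1)| + |e(x2) + e(x2+ξ2)| ≤ 4 - 8·sin(π·‖ξ1-ξ2‖/4)², where e(x) = exp(2πix) and ‖t‖ denotes the distance from t to the nearest integer. -/
noncomputable def e (x : ℝ) : ℂ := Complex.exp (2 * Real.pi * Complex.I * x)

/-- distance from a real number to the nearest integer -/
noncomputable def nearestIntDist (t : ℝ) : ℝ := |t - round t|

open Real

lemma aux_key (ξ : ℝ) :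
    Complex.exp (↑π * Complex.I * ↑ξ) * (2 * Complex.cos (↑π * ↑ξ)) = 1 + e ξ := by
  rw [Complex.cos, e,
    show (2:ℂ) * ((Complex.exp (↑π * ↑ξ * Complex.I) + Complex.exp (-(↑π * ↑ξ) * Complex.I)) / 2)
      = Complex.exp (↑π * ↑ξ * Complex.I) + Complex.exp (-(↑π * ↑ξ) * Complex.I) from by ring,
    mul_add, ← Complex.exp_add, ← Complex.exp_add,
    show ↑π * Complex.I * ↑ξ + -(↑π * ↑ξ) * Complex.I = 0 from by ring,
    show ↑π * Complex.I * ↑ξ + ↑π * ↑ξ * Complex.I = 2 * ↑π * Complex.I * ↑ξ from by ring,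
    Complex.exp_zero, add_comm]

lemma aux_abs (x ξ : ℝ) :
    ‖e x + e (x + ξ)‖ = 2 * |Real.cos (π * ξ)| := by
  have hfac : e x + e (x + ξ) = e x * (1 + e ξ) := by
    rw [e, e, e, mul_add, mul_one, ← Complex.exp_add]
    congr 2
    push_cast; ring
  have habs1 : ‖e x‖ = 1 := by
    rw [e, Complex.norm_exp]
    simp
  have habs2 : ‖Complex.exp (↑π * Complex.I * ↑ξ)‖ = 1 := by
    rw [Complex.norm_exp]
    simp
  rw [hfac, norm_mul, habs1, one_mul, ← aux_key, norm_mul, habs2, one_mul]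
  have : Complex.cos (↑π * ↑ξ) = ((Real.cos (π * ξ) : ℝ) : ℂ) := by
    rw [Complex.ofReal_cos]; push_cast; ring_nf
  rw [this, norm_mul, Complex.norm_real, Real.norm_eq_abs]; norm_num

lemma aux_cos (ξ : ℝ) : |Real.cos (π * ξ)| = Real.cos (π * nearestIntDist ξ) := by
  have h : π * ξ = π * (ξ - round ξ) + (round ξ : ℤ) * π := by ring
  rw [h, Real.cos_add_int_mul_pi, abs_mul]
  have hone : |((-1:ℝ)) ^ round ξ| = 1 := by
    rcases Int.even_or_odd (round ξ) with he | ho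
    · rw [he.neg_one_zpow]; norm_num
    · rw [Odd.neg_one_zpow ho]; norm_num
  rw [hone, one_mul]
  have hle : |ξ - round ξ| ≤ 1 / 2 := abs_sub_round ξ
  have : |Real.cos (π * (ξ - round ξ))| = Real.cos (π * |ξ - round ξ|) := by
    rw [← Real.cos_abs (π * (ξ - round ξ)), abs_mul, abs_of_pos Real.pi_pos]
    have h2 := abs_le.mp hle
    refine abs_of_nonneg (Real.cos_nonneg_of_mem_Icc ⟨?_, ?_⟩)
    · nlinarith [Real.pi_pos, abs_nonneg (ξ - (round ξ : ℝ))]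
    · nlinarith [Real.pi_pos, abs_nonneg (ξ - (round ξ : ℝ))]
  rw [this, nearestIntDist]

theorem stmt0 (x1 x2 ξ1 ξ2 : ℝ) :
    ‖e x1 + e (x1 + ξ1)‖ + ‖e x2 + e (x2 + ξ2)‖ ≤
      4 - 8 * (Real.sin (Real.pi * nearestIntDist (ξ1 - ξ2) / 4)) ^ 2 := by
  rw [aux_abs, aux_abs, aux_cos, aux_cos]
  set a := nearestIntDist ξ1 with ha
  set b := nearestIntDist ξ2 with hb
  set d := nearestIntDist (ξ1 - ξ2) with hd
  have ha0 : 0 ≤ a := abs_nonneg _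
  have hb0 : 0 ≤ b := abs_nonneg _
  have hd0 : 0 ≤ d := abs_nonneg _
  have ha2 : a ≤ 1 / 2 := abs_sub_round ξ1
  have hb2 : b ≤ 1 / 2 := abs_sub_round ξ2
  have htri : d ≤ a + b := by
    calc d ≤ |(ξ1 - ξ2) - ((round ξ1 - round ξ2 : ℤ) : ℝ)| := round_le (ξ1 - ξ2) _
      _ ≤ a + b := by
          rw [ha, hb, nearestIntDist, nearestIntDist]
          push_cast
          rw [show ξ1 - ξ2 - ((round ξ1 : ℝ) - (round ξ2 : ℝ))
              = (ξ1 - round ξ1) - (ξ2 - round ξ2) from by ring]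
          exact abs_sub _ _
  have hrhs : 4 - 8 * Real.sin (π * d / 4) ^ 2 = 4 * Real.cos (π * d / 2) := by
    rw [Real.sin_sq_eq_half_sub, show 2 * (π * d / 4) = π * d / 2 from by ring]
    ring
  rw [hrhs]
  have hsum : Real.cos (π * a) + Real.cos (π * b)
      = 2 * Real.cos ((π * a + π * b) / 2) * Real.cos ((π * a - π * b) / 2) :=
    Real.cos_add_cos _ _
  have hc1 : 0 ≤ Real.cos ((π * a + π * b) / 2) := by
    refine Real.cos_nonneg_of_mem_Icc ⟨?_, ?_⟩
    · nlinarith [Real.pi_pos]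
    · nlinarith [Real.pi_pos]
  have hc2 : Real.cos ((π * a - π * b) / 2) ≤ 1 := Real.cos_le_one _
  have hmono : Real.cos ((π * a + π * b) / 2) ≤ Real.cos (π * d / 2) := by
    refine Real.cos_le_cos_of_nonneg_of_le_pi ?_ ?_ ?_
    · nlinarith [Real.pi_pos]
    · nlinarith [Real.pi_pos]
    · nlinarith [Real.pi_pos]
  nlinarith [Real.cos_le_one ((π * a + π * b) / 2)]
end

section
/- Let b be a strongly block-additive q-ary function corresponding to F'. Define G(n) = Σ_{j=1}^{m-1} F'(n q^j) and F(n) = F'(n) + G(n) - G(⌊n/q⌋). Then b also corresponds to F, and Σ_{j=1}^{m-1} F(n q^j) = 0 for all n ∈ ℕ. -/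
/-- Given a strongly block-additive `q`-ary function `b` corresponding to `F'`
(`F'` depends only on the `m` lowest base-`q` digits, `F' 0 = 0`,
`b n = ∑_{j ≥ 0} F' (⌊q^(m-1) n / q^j⌋)`), define `G n = ∑_{j=1}^{m-1} F' (n q^j)`
and `F n = F' n + G n - G ⌊n/q⌋`.  Then `b` also corresponds to `F`, and
`∑_{j=1}^{m-1} F (n q^j) = 0` for all `n`. -/
theorem stmt2 (q m : ℕ) (hq : 2 ≤ q) (hm : 1 ≤ m) (F' : ℕ → ℕ) (b : ℕ → ℕ)
    (hF'0 : F' 0 = 0) (hF'mod : ∀ n, F' n = F' (n % q ^ m))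
    (hb : ∀ n, b n = ∑ j ∈ Finset.range (m + n), F' (q ^ (m - 1) * n / q ^ j))
    (G F : ℕ → ℤ)
    (hG : ∀ n, G n = ∑ j ∈ Finset.range (m - 1), (F' (n * q ^ (j + 1)) : ℤ))
    (hF : ∀ n, F n = (F' n : ℤ) + G n - G (n / q)) :
    (∀ n, (b n : ℤ) = ∑ j ∈ Finset.range (m + n), F (q ^ (m - 1) * n / q ^ j)) ∧
      (∀ n, ∑ j ∈ Finset.range (m - 1), F (n * q ^ (j + 1)) = 0) := by
  have hq0 : 0 < q := by omega
  have hFq0 : ∀ n k, F' (n * q ^ (m + k)) = 0 := by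
    intro n k
    have h1 : n * q ^ (m + k) = n * q ^ k * q ^ m := by rw [pow_add]; ring
    rw [h1, hF'mod, Nat.mul_mod_left, hF'0]
  have hG0m : ∀ n, G (n * q ^ (m - 1)) = 0 := by
    intro n
    rw [hG]
    apply Finset.sum_eq_zero
    intro j _
    have h1 : n * q ^ (m - 1) * q ^ (j + 1) = n * q ^ (m + j) := by
      rw [mul_assoc, ← pow_add]
      congr 2
      omega
    rw [h1, hFq0]
    rfl
  constructor
  · intro n
    set a : ℕ → ℕ := fun j => q ^ (m - 1) * n / q ^ j with ha
    have hstep : ∀ j, a (j + 1) = a j / q := by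
      intro j
      simp only [ha]
      rw [Nat.div_div_eq_div_mul, ← pow_succ]
    have key : ∀ j, F (a j) = (F' (a j) : ℤ) + (G (a j) - G (a (j + 1))) := by
      intro j
      rw [hF, hstep]
      ring
    have hlast : a (m + n) = 0 := by
      simp only [ha]
      apply Nat.div_eq_of_lt
      have hn : n < q ^ (n + 1) :=
        lt_of_lt_of_le (Nat.lt_two_pow_self (n := n))
          (le_trans (Nat.pow_le_pow_left hq n) (Nat.pow_le_pow_right hq0 (Nat.le_succ n)))
      calc q ^ (m - 1) * n < q ^ (m - 1) * q ^ (n + 1) :=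
            Nat.mul_lt_mul_of_le_of_lt (le_refl _) hn (pow_pos hq0 _)
        _ = q ^ (m + n) := by rw [← pow_add]; congr 1; omega
    have hG0 : G 0 = 0 := by
      rw [hG]
      apply Finset.sum_eq_zero
      intro j _
      simp [hF'0]
    have ha0 : G (a 0) = 0 := by
      have : a 0 = n * q ^ (m - 1) := by simp [ha, mul_comm]
      rw [this, hG0m]
    calc (b n : ℤ) = ∑ j ∈ Finset.range (m + n), (F' (a j) : ℤ) := by
          rw [hb]; push_cast; rfl
      _ = (∑ j ∈ Finset.range (m + n), (F' (a j) : ℤ))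
            + ((fun j => G (a j)) 0 - (fun j => G (a j)) (m + n)) := by
          simp only []
          rw [ha0, hlast, hG0]
          ring
      _ = (∑ j ∈ Finset.range (m + n), (F' (a j) : ℤ))
            + ∑ j ∈ Finset.range (m + n), (G (a j) - G (a (j + 1))) := by
          rw [Finset.sum_range_sub' (fun j => G (a j))]
      _ = ∑ j ∈ Finset.range (m + n), ((F' (a j) : ℤ) + (G (a j) - G (a (j + 1)))) := by
          rw [Finset.sum_add_distrib]
      _ = ∑ j ∈ Finset.range (m + n), F (a j) :=
          Finset.sum_congr rfl (fun j _ => (key j).symm)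
  · intro n
    have key : ∀ j, F (n * q ^ (j + 1))
        = (F' (n * q ^ (j + 1)) : ℤ) + (G (n * q ^ (j + 1)) - G (n * q ^ j)) := by
      intro j
      have h1 : n * q ^ (j + 1) / q = n * q ^ j := by
        rw [pow_succ, ← mul_assoc, Nat.mul_div_cancel _ hq0]
      rw [hF, h1]
      ring
    calc ∑ j ∈ Finset.range (m - 1), F (n * q ^ (j + 1))
        = ∑ j ∈ Finset.range (m - 1),
            ((F' (n * q ^ (j + 1)) : ℤ) + (G (n * q ^ (j + 1)) - G (n * q ^ j))) :=
          Finset.sum_congr rfl (fun j _ => key j)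
      _ = (∑ j ∈ Finset.range (m - 1), (F' (n * q ^ (j + 1)) : ℤ))
            + ∑ j ∈ Finset.range (m - 1), (G (n * q ^ (j + 1)) - G (n * q ^ j)) :=
          Finset.sum_add_distrib
      _ = G n + ((fun j => G (n * q ^ j)) (m - 1) - (fun j => G (n * q ^ j)) 0) := by
          rw [← hG, Finset.sum_range_sub (fun j => G (n * q ^ j))]
      _ = 0 := by
          simp only []
          rw [hG0m]
          simp
end

section
/- Let b be a strongly block-additive q-ary function (with b(n) = Σ_{j≥0} F(⌊n/q^j⌋), F supported on m digits, F(0)=0) and m' > 1 an integer. The following are equivalent: (i) there exists n ∈ ℕ with m' ∤ b(n); (ii) there exists n < q^m with m' ∤ F(n); (iii) there exists n < q^m with m' ∤ b(n). -/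
/-- For a strongly block-additive `q`-ary function `b` and `m' > 1`, the following are
equivalent: (i) some `n` with `m' ∤ b n`; (ii) some `n < q^m` with `m' ∤ F n`;
(iii) some `n < q^m` with `m' ∤ b n`. -/
theorem stmt4 (q m m' : ℕ) (hq : 2 ≤ q) (hm : 1 ≤ m) (hm' : 1 < m')
    (F b : ℕ → ℕ) (hF0 : F 0 = 0) (hFmod : ∀ n, F n = F (n % q ^ m))
    (hb : ∀ n, b n = ∑ j ∈ Finset.range (m + n), F (n / q ^ j)) :
    List.TFAE [∃ n : ℕ, ¬ m' ∣ b n,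
               ∃ n : ℕ, n < q ^ m ∧ ¬ m' ∣ F n,
               ∃ n : ℕ, n < q ^ m ∧ ¬ m' ∣ b n] := by
  tfae_have 3 → 1
  · rintro ⟨n, _, h⟩; exact ⟨n, h⟩
  tfae_have 1 → 2
  · rintro ⟨n, hn⟩
    by_contra hc
    push_neg at hc
    apply hn
    rw [hb]
    apply Finset.dvd_sum
    intro j _
    rw [hFmod]
    exact hc _ (Nat.mod_lt _ (pow_pos (by omega) m))
  tfae_have 2 → 3
  · rintro ⟨n, hn, hFn⟩
    have hex : ∃ k, ¬ m' ∣ F k := ⟨n, hFn⟩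
    set N := Nat.find hex with hNdef
    have hNspec : ¬ m' ∣ F N := Nat.find_spec hex
    have hNle : N ≤ n := Nat.find_min' hex hFn
    have hNlt : N < q ^ m := lt_of_le_of_lt hNle hn
    have hN0 : N ≠ 0 := by
      intro h; apply hNspec; rw [h, hF0]; exact dvd_zero m'
    refine ⟨N, hNlt, ?_⟩
    rw [hb]
    have hsplit : m + N = (m + N - 1) + 1 := by omega
    rw [hsplit, Finset.sum_range_succ']
    intro hdvd
    apply hNspec
    have hdvd1 : m' ∣ ∑ i ∈ Finset.range (m + N - 1), F (N / q ^ (i + 1)) := by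
      apply Finset.dvd_sum
      intro j _
      have hlt : N / q ^ (j + 1) < N :=
        Nat.div_lt_self (Nat.pos_of_ne_zero hN0)
          (Nat.one_lt_pow (by omega) (by omega))
      exact not_not.mp (Nat.find_min hex hlt)
    have := (Nat.dvd_add_right hdvd1).mp hdvd
    simpa using this
  tfae_finish
end

section
/- Let M_ℓ (ℓ ∈ ℕ) be N×N complex matrices whose absolute row sums are all ≤ 1. Suppose there exist integers m0, m1 ≥ 1 and constants c0 > 0, η > 0 such that: (1) every product A of m0 consecutive matrices M_ℓ satisfies, for each row i, either |A_{i,1}| ≥ c0 or Σ_j |A_{i,j}| ≤ 1-η; and (2) every product B of m1 consecutive matrices M_ℓ satisfies Σ_j |B_{1,j}| ≤ 1-η. Then there exist constants C > 0 and δ > 0 such that ‖Π_{ℓ=r}^{r+k-1} M_ℓ‖_∞ ≤ C q^{-δk} uniformly for all r ≥ 0 and k ≥ 0. -/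
open Finset

lemma rowsum_mul_le {N : ℕ} (X Y : Matrix (Fin N) (Fin N) ℂ) (i : Fin N)
    (s : Fin N → ℝ) (hs : ∀ k, ∑ j, ‖Y k j‖ ≤ s k) :
    ∑ j, ‖(X * Y) i j‖ ≤ ∑ k, ‖X i k‖ * s k := by
  calc ∑ j, ‖(X * Y) i j‖
      ≤ ∑ j, ∑ k, ‖X i k‖ * ‖Y k j‖ := by
        refine Finset.sum_le_sum fun j _ => ?_
        simp only [Matrix.mul_apply]
        calc ‖∑ k, X i k * Y k j‖
            ≤ ∑ k, ‖X i k * Y k j‖ := norm_sum_le _ _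
          _ = ∑ k, ‖X i k‖ * ‖Y k j‖ := by simp [map_mul]
    _ = ∑ k, ‖X i k‖ * ∑ j, ‖Y k j‖ := by
        rw [Finset.sum_comm]; simp [Finset.mul_sum]
    _ ≤ ∑ k, ‖X i k‖ * s k :=
        Finset.sum_le_sum fun k _ =>
          mul_le_mul_of_nonneg_left (hs k) (norm_nonneg _)

/-- Exponential decay of products of matrices with row sums ≤ 1 under the two
structural conditions; `prodM M r k = M r * M (r+1) * ⋯ * M (r+k-1)`, and the
conclusion bounds every absolute row sum (i.e. the row-sum norm) of the product. -/
theorem stmt7 (N q : ℕ) (hN : 0 < N) (hq : 2 ≤ q)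
    (M : ℕ → Matrix (Fin N) (Fin N) ℂ)
    (prodM : ℕ → ℕ → Matrix (Fin N) (Fin N) ℂ)
    (hprod : ∀ r k, prodM r k = (((List.range k).map fun t => M (r + t)).prod))
    (hrow : ∀ ℓ i, ∑ j, ‖M ℓ i j‖ ≤ 1)
    (m0 m1 : ℕ) (hm0 : 1 ≤ m0) (hm1 : 1 ≤ m1)
    (c0 η : ℝ) (hc0 : 0 < c0) (hη : 0 < η)
    (hcond1 : ∀ r, ∀ i : Fin N,
      c0 ≤ ‖prodM r m0 i ⟨0, hN⟩‖ ∨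
        ∑ j, ‖prodM r m0 i j‖ ≤ 1 - η)
    (hcond2 : ∀ r, ∑ j, ‖prodM r m1 ⟨0, hN⟩ j‖ ≤ 1 - η) :
    ∃ C : ℝ, 0 < C ∧ ∃ δ : ℝ, 0 < δ ∧
      ∀ r k : ℕ, ∀ i : Fin N,
        ∑ j, ‖prodM r k i j‖ ≤ C * (q : ℝ) ^ (-(δ * k)) := by
  -- splitting of products
  have hsplit : ∀ r a b, prodM r (a + b) = prodM r a * prodM (r + a) b := by
    intro r a b
    simp only [hprod, List.range_add, List.map_append, List.prod_append, List.map_map,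
      Function.comp, add_assoc]
    rfl
  -- products have row sums ≤ 1
  have hone : ∀ k r i, ∑ j, ‖prodM r k i j‖ ≤ 1 := by
    intro k
    induction k with
    | zero =>
      intro r i
      rw [hprod]
      simp only [List.range_zero, List.map_nil, List.prod_nil]
      have h1 : ∀ j, ‖(1 : Matrix (Fin N) (Fin N) ℂ) i j‖
          = if i = j then 1 else 0 := by
        intro j; rw [Matrix.one_apply, apply_ite norm]; simp
      rw [Finset.sum_congr rfl fun j _ => h1 j]
      simp
    | succ k ih =>
      intro r i
      have h : prodM r (k + 1) = prodM r k * prodM (r + k) 1 := hsplit r k 1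
      have h1 : prodM (r + k) 1 = M (r + k) := by
        rw [hprod]
        show ([M (r + k + 0)]).prod = M (r + k)
        simp
      rw [h, h1]
      calc ∑ j, ‖(prodM r k * M (r + k)) i j‖
          ≤ ∑ l, ‖prodM r k i l‖ * 1 :=
            rowsum_mul_le _ _ _ _ (fun l => hrow (r + k) l)
        _ = ∑ l, ‖prodM r k i l‖ := by simp
        _ ≤ 1 := ih r i
  have habs0 : ∀ k r i j, (0:ℝ) ≤ ‖prodM r k i j‖ :=
    fun k r i j => norm_nonneg _
  set m := m0 + m1 with hm
  have hmpos : 0 < m := by omega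
  set ε : ℝ := η * min c0 1 with hε
  have hεpos : 0 < ε := mul_pos hη (lt_min hc0 one_pos)
  set ρ : ℝ := 1 - ε with hρ
  set i0 : Fin N := ⟨0, hN⟩ with hi0
  -- block bound
  have hblock : ∀ r i, ∑ j, ‖prodM r m i j‖ ≤ ρ := by
    intro r i
    have h : prodM r m = prodM r m0 * prodM (r + m0) m1 := hsplit r m0 m1
    rw [h]
    rcases hcond1 r i with hc | hc
    · -- |A i 0| ≥ c0
      set s : Fin N → ℝ := fun k => if k = i0 then 1 - η else 1 with hsdef
      have hs : ∀ k, ∑ j, ‖prodM (r + m0) m1 k j‖ ≤ s k := by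
        intro k
        by_cases hk : k = i0
        · subst hk; simp only [hsdef, if_pos rfl]; exact hcond2 (r + m0)
        · simp only [hsdef, if_neg hk]; exact hone m1 (r + m0) k
      calc ∑ j, ‖(prodM r m0 * prodM (r + m0) m1) i j‖
          ≤ ∑ k, ‖prodM r m0 i k‖ * s k := rowsum_mul_le _ _ _ _ hs
        _ = (∑ k, ‖prodM r m0 i k‖) - η * ‖prodM r m0 i i0‖ := by
            have : ∀ k, ‖prodM r m0 i k‖ * s k
                = ‖prodM r m0 i k‖
                  - (if k = i0 then η * ‖prodM r m0 i i0‖ else 0) := by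
              intro k
              by_cases hk : k = i0
              · subst hk; simp [hsdef]; ring
              · simp only [hsdef, if_neg hk]; ring
            simp only [this, Finset.sum_sub_distrib, Finset.sum_ite_eq',
              Finset.mem_univ, if_true]
        _ ≤ 1 - η * c0 := by
            have h1 := hone m0 r i
            have h2 : η * c0 ≤ η * ‖prodM r m0 i i0‖ :=
              mul_le_mul_of_nonneg_left hc hη.le
            linarith
        _ ≤ ρ := by
            have : ε ≤ η * c0 := by
              rw [hε]
              exact mul_le_mul_of_nonneg_left (min_le_left _ _) hη.le
            rw [hρ]; linarith
    · -- row sum of A ≤ 1 - η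
      calc ∑ j, ‖(prodM r m0 * prodM (r + m0) m1) i j‖
          ≤ ∑ k, ‖prodM r m0 i k‖ * 1 :=
            rowsum_mul_le _ _ _ _ (fun k => hone m1 (r + m0) k)
        _ = ∑ k, ‖prodM r m0 i k‖ := by simp
        _ ≤ 1 - η := hc
        _ ≤ ρ := by
            have : ε ≤ η * 1 := mul_le_mul_of_nonneg_left (min_le_right _ _) hη.le
            rw [hρ]; linarith
  set ρ' : ℝ := max ρ (1/2) with hρ'
  have hρ'pos : 0 < ρ' := lt_of_lt_of_le (by norm_num) (le_max_right _ _)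
  have hρ'lt1 : ρ' < 1 := by
    rcases max_cases ρ (1/2 : ℝ) with ⟨h1, _⟩ | ⟨h1, _⟩ <;> rw [hρ', h1]
    · rw [hρ]; linarith
    · norm_num
  have hρ'half : (1/2 : ℝ) ≤ ρ' := le_max_right _ _
  -- iterated block bound
  have hiter : ∀ a r b i, ∑ j, ‖prodM r (a * m + b) i j‖ ≤ ρ' ^ a := by
    intro a
    induction a with
    | zero => intro r b i; simpa using hone b r i
    | succ a ih =>
      intro r b i
      have hk : (a + 1) * m + b = m + (a * m + b) := by ring
      rw [hk, hsplit r m (a * m + b)]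
      calc ∑ j, ‖(prodM r m * prodM (r + m) (a * m + b)) i j‖
          ≤ ∑ k, ‖prodM r m i k‖ * ρ' ^ a :=
            rowsum_mul_le _ _ _ _ (fun k => ih (r + m) b k)
        _ = (∑ k, ‖prodM r m i k‖) * ρ' ^ a := by rw [Finset.sum_mul]
        _ ≤ ρ' * ρ' ^ a := by
            apply mul_le_mul_of_nonneg_right _ (pow_nonneg hρ'pos.le a)
            exact le_trans (hblock r i) (le_max_left _ _)
        _ = ρ' ^ (a + 1) := by ring
  -- choose constants
  have hq1 : (1:ℝ) < q := by exact_mod_cast lt_of_lt_of_le one_lt_two hq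
  have hlq : 0 < Real.log q := Real.log_pos hq1
  set L : ℝ := Real.log ρ' with hL
  have hLneg : L < 0 := Real.log_neg hρ'pos hρ'lt1
  have hmR : (0:ℝ) < m := by exact_mod_cast hmpos
  refine ⟨2, by norm_num, -L / (m * Real.log q),
    div_pos (neg_pos.mpr hLneg) (mul_pos hmR hlq), ?_⟩
  intro r k i
  set δ : ℝ := -L / (m * Real.log q) with hδ
  -- rewrite rhs
  have hrhs : (q : ℝ) ^ (-(δ * k)) = Real.exp (k * L / m) := by
    rw [Real.rpow_def_of_pos (by positivity : (0:ℝ) < q)]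
    congr 1
    rw [hδ]
    field_simp
  rw [hrhs]
  set a := k / m with ha
  have hdecomp : a * m + k % m = k := by
    rw [ha, Nat.mul_comm]; exact Nat.div_add_mod k m
  have hbound : ∑ j, ‖prodM r k i j‖ ≤ ρ' ^ a := by
    rw [← hdecomp]; exact hiter a r (k % m) i
  refine le_trans hbound ?_
  -- ρ'^a ≤ 2 * exp(k L / m)
  have hpow : ρ' ^ a = Real.exp (a * L) := by
    rw [hL, mul_comm, Real.exp_mul, Real.exp_log hρ'pos, Real.rpow_natCast]
  rw [hpow]
  have hkle : k ≤ (a + 1) * m := by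
    calc k = a * m + k % m := hdecomp.symm
      _ ≤ a * m + m := Nat.add_le_add_left (Nat.mod_lt k hmpos).le _
      _ = (a + 1) * m := by ring
  have hkR : (k : ℝ) ≤ ((a : ℝ) + 1) * m := by exact_mod_cast hkle
  have haR : (k : ℝ) / m - 1 ≤ a := by
    rw [sub_le_iff_le_add, div_le_iff₀ hmR]
    linarith
  have hexp : a * L ≤ k * L / m - L := by
    have h1 : ((k : ℝ) / m - 1) * L ≥ (a : ℝ) * L :=
      mul_le_mul_of_nonpos_right haR hLneg.le
    have : ((k : ℝ) / m - 1) * L = k * L / m - L := by ring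
    linarith
  calc Real.exp (a * L) ≤ Real.exp (k * L / m - L) := Real.exp_le_exp.mpr hexp
    _ = Real.exp (-L) * Real.exp (k * L / m) := by
        rw [← Real.exp_add]; ring_nf
    _ ≤ 2 * Real.exp (k * L / m) := by
        apply mul_le_mul_of_nonneg_right _ (Real.exp_pos _).le
        rw [← Real.exp_log (by norm_num : (0:ℝ) < 2)]
        apply Real.exp_le_exp.mpr
        rw [hL, ← Real.log_inv]
        apply Real.log_le_log (by positivity)
        rw [inv_le_comm₀ (by positivity) (by norm_num)]
        linarith [hρ'half]
end

section
/- For all integers a, b, m with m ≥ 1, the complete quadratic Gauss sum satisfies |Σ_{n=0}^{m-1} e((an² + bn)/m)| ≤ √(2m·gcd(a,m)). -/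
open Finset

lemma e_add (x y : ℝ) : e (x + y) = e x * e y := by
  simp only [e, ← Complex.exp_add]; congr 1; push_cast; ring

lemma e_int (k : ℤ) : e k = 1 := by
  simp only [e]
  have : 2 * (Real.pi : ℂ) * Complex.I * (k : ℝ) = (k : ℤ) * (2 * Real.pi * Complex.I) := by
    push_cast; ring
  rw [this, Complex.exp_int_mul_two_pi_mul_I]

lemma e_add_int (x : ℝ) (k : ℤ) : e (x + (k : ℝ)) = e x := by
  rw [e_add, e_int, mul_one]

lemma abs_e (x : ℝ) : ‖e x‖ = 1 := by
  simp only [e, Complex.norm_exp]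
  have : (2 * (Real.pi : ℂ) * Complex.I * (x : ℝ)).re = 0 := by
    simp [Complex.mul_re, Complex.mul_im]
  rw [this, Real.exp_zero]

lemma conj_e (x : ℝ) : (starRingEnd ℂ) (e x) = e (-x) := by
  simp only [e, ← Complex.exp_conj]
  congr 1
  simp [Complex.ext_iff]

lemma e_pow (x : ℝ) (k : ℕ) : e x ^ k = e (k * x) := by
  induction k with
  | zero => simp [e]
  | succ k ih => rw [pow_succ, ih, ← e_add]; congr 1; push_cast; ring

lemma geom (c : ℤ) (m : ℕ) (hm : 1 ≤ m) :
    ∑ k ∈ range m, e (((c * k : ℤ) : ℝ) / m) = if (m : ℤ) ∣ c then (m : ℂ) else 0 := by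
  have hm0 : (m : ℝ) ≠ 0 := by positivity
  have hterm : ∀ k : ℕ, e (((c * k : ℤ) : ℝ) / m) = e ((c : ℝ) / m) ^ k := by
    intro k; rw [e_pow]; congr 1; push_cast; ring
  rw [Finset.sum_congr rfl (fun k _ => hterm k)]
  by_cases h : (m : ℤ) ∣ c
  · obtain ⟨d, rfl⟩ := h
    have he1 : e ((((m : ℤ) * d : ℤ) : ℝ) / m) = 1 := by
      rw [show ((((m : ℤ) * d : ℤ) : ℝ) / m) = ((d : ℤ) : ℝ) by push_cast; field_simp, e_int]
    rw [if_pos ⟨d, rfl⟩]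
    simp only [he1, one_pow, Finset.sum_const, Finset.card_range, nsmul_eq_mul, mul_one]
  · rw [if_neg h]
    have hz1 : e ((c : ℝ) / m) ≠ 1 := by
      intro hz
      rw [e, Complex.exp_eq_one_iff] at hz
      obtain ⟨n, hn⟩ := hz
      apply h
      have hpi : (2 * (Real.pi : ℂ) * Complex.I) ≠ 0 := by
        simp [Real.pi_ne_zero, Complex.I_ne_zero]
      push_cast at hn
      have hcm : (2 * (Real.pi : ℂ) * Complex.I) * ((c : ℂ) / m)
          = (2 * (Real.pi : ℂ) * Complex.I) * n := by linear_combination hn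
      have h3 : (c : ℂ) / m = n := mul_left_cancel₀ hpi hcm
      have hmC : (m : ℂ) ≠ 0 := by exact_mod_cast hm0
      have h4 : (c : ℂ) = n * m := by
        field_simp at h3
        linear_combination h3
      have h5 : c = n * m := by exact_mod_cast h4
      exact ⟨n, by linarith [h5]⟩
    have hzm : e ((c : ℝ) / m) ^ m = 1 := by
      rw [e_pow]
      have : (m : ℝ) * ((c : ℝ) / m) = ((c : ℤ) : ℝ) := by field_simp
      rw [this, e_int]
    rw [geom_sum_eq hz1, hzm]
    simp

lemma shift1 (m : ℕ) (g : ℕ → ℂ) (hg : ∀ n, g (n + m) = g n) :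
    ∑ n ∈ range m, g (n + 1) = ∑ n ∈ range m, g n := by
  have h1 := Finset.sum_range_succ' g m
  have h2 := Finset.sum_range_succ g m
  have h0 : g m = g 0 := by simpa using hg 0
  rw [h0] at h2
  rw [h2] at h1
  exact (add_right_cancel h1).symm

lemma shift (m k : ℕ) (g : ℕ → ℂ) (hg : ∀ n, g (n + m) = g n) :
    ∑ n ∈ range m, g (n + k) = ∑ n ∈ range m, g n := by
  induction k with
  | zero => simp
  | succ k ih =>
    have step := shift1 m (fun n => g (n + k)) (fun n => by
      show g (n + m + k) = g (n + k)
      rw [show n + m + k = n + k + m by ring, hg])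
    calc ∑ n ∈ range m, g (n + (k + 1)) = ∑ n ∈ range m, g ((n + 1) + k) := by
          apply Finset.sum_congr rfl; intro n _; congr 1; ring
      _ = ∑ n ∈ range m, g (n + k) := step
      _ = ∑ n ∈ range m, g n := ih

lemma card_mult_le (A m : ℕ) (hm : 1 ≤ m) :
    ((range m).filter (fun h => m ∣ A * h)).card ≤ Nat.gcd A m := by
  set g := Nat.gcd A m with hg
  have hgpos : 0 < g := Nat.gcd_pos_of_pos_right A hm
  have hgm : g ∣ m := Nat.gcd_dvd_right A m
  set d := m / g with hd
  have hdg : d * g = m := Nat.div_mul_cancel hgm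
  have hdpos : 0 < d := by
    rcases Nat.eq_zero_or_pos d with h | h
    · rw [h, zero_mul] at hdg; omega
    · exact h
  have hsub : (range m).filter (fun h => m ∣ A * h) ⊆ (range g).image (fun t => t * d) := by
    intro x hx
    simp only [mem_filter, mem_range] at hx
    obtain ⟨hxm, hdvd⟩ := hx
    have hdx : d ∣ x := by
      have hA : g * (A / g) = A := Nat.mul_div_cancel' (Nat.gcd_dvd_left A m)
      have h1 : g * d ∣ g * ((A / g) * x) := by
        rw [mul_comm g d, hdg, ← mul_assoc, hA]; exact hdvd
      have h2 : d ∣ (A / g) * x := (mul_dvd_mul_iff_left hgpos.ne').mp h1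
      have hcop : Nat.Coprime (A / g) d := by
        have := Nat.coprime_div_gcd_div_gcd (m := A) (n := m) hgpos
        simpa [← hg, ← hd] using this
      exact (Nat.Coprime.dvd_of_dvd_mul_left (hcop.symm) h2)
    simp only [mem_image, mem_range]
    refine ⟨x / d, ?_, Nat.div_mul_cancel hdx⟩
    exact Nat.div_lt_of_lt_mul (by rw [hdg]; exact hxm)
  calc ((range m).filter (fun h => m ∣ A * h)).card
      ≤ ((range g).image (fun t => t * d)).card := Finset.card_le_card hsub
    _ ≤ (range g).card := Finset.card_image_le
    _ = g := Finset.card_range g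

/-- Complete quadratic Gauss sum bound. -/
theorem stmt9 (a b : ℤ) (m : ℕ) (hm : 1 ≤ m) :
    ‖∑ n ∈ Finset.range m, e (((a * n ^ 2 + b * n : ℤ) : ℝ) / m)‖ ≤
      Real.sqrt (2 * m * Int.gcd a m) := by
  classical
  have hm0 : (m : ℝ) ≠ 0 := by positivity
  set E : ℕ → ℂ := fun n => e (((a * n ^ 2 + b * n : ℤ) : ℝ) / m) with hE
  set S : ℂ := ∑ n ∈ Finset.range m, E n with hS
  have hE_per : ∀ n, E (n + m) = E n := by
    intro n
    have harg : ((a * (n + m : ℕ) ^ 2 + b * (n + m : ℕ) : ℤ) : ℝ) / m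
        = ((a * n ^ 2 + b * n : ℤ) : ℝ) / m + ((a * (2 * n + m) + b : ℤ) : ℝ) := by
      push_cast; field_simp; ring
    simp only [hE]
    rw [harg, e_add_int]
  have hpoint : ∀ h k : ℕ, E (h + k) * (starRingEnd ℂ) (E k)
      = e (((a * h ^ 2 + b * h : ℤ) : ℝ) / m) * e ((((2 * a * h : ℤ)) * k : ℤ) / m : ℝ) := by
    intro h k
    simp only [hE]
    rw [conj_e, ← e_add, ← e_add]
    congr 1
    push_cast
    field_simp
    ring
  have key : S * (starRingEnd ℂ) S
      = ∑ h ∈ range m, (e (((a * h ^ 2 + b * h : ℤ) : ℝ) / m)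
          * ∑ k ∈ range m, e ((((2 * a * h : ℤ)) * k : ℤ) / m : ℝ)) := by
    calc S * (starRingEnd ℂ) S = ∑ k ∈ range m, S * (starRingEnd ℂ) (E k) := by
          rw [hS, map_sum, Finset.mul_sum]
      _ = ∑ k ∈ range m, ∑ h ∈ range m, E (h + k) * (starRingEnd ℂ) (E k) := by
          apply Finset.sum_congr rfl; intro k _
          rw [hS, ← Finset.sum_mul, shift m k E hE_per]
      _ = ∑ h ∈ range m, ∑ k ∈ range m, E (h + k) * (starRingEnd ℂ) (E k) :=
          Finset.sum_comm
      _ = _ := by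
          apply Finset.sum_congr rfl; intro h _
          rw [Finset.mul_sum]
          exact Finset.sum_congr rfl fun k _ => hpoint h k
  have hsq : ‖S‖ ^ 2 ≤ (m : ℝ) * (Int.gcd (2 * a) m) := by
    have h1 : ‖S‖ ^ 2 = ‖S * (starRingEnd ℂ) S‖ := by
      rw [norm_mul, Complex.norm_conj]; ring
    rw [h1, key]
    calc ‖(∑ h ∈ range m, (e (((a * h ^ 2 + b * h : ℤ) : ℝ) / m)
            * ∑ k ∈ range m, e ((((2 * a * h : ℤ)) * k : ℤ) / m : ℝ)))‖
        ≤ ∑ h ∈ range m, ‖(e (((a * h ^ 2 + b * h : ℤ) : ℝ) / m)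
            * ∑ k ∈ range m, e ((((2 * a * h : ℤ)) * k : ℤ) / m : ℝ))‖ :=
          norm_sum_le _ _
      _ = ∑ h ∈ range m, (if (m : ℤ) ∣ 2 * a * h then (m : ℝ) else 0) := by
          apply Finset.sum_congr rfl; intro h _
          rw [norm_mul, abs_e, one_mul, geom (2 * a * h) m hm]
          split <;> simp
      _ = (m : ℝ) * ((range m).filter (fun h : ℕ => (m : ℤ) ∣ 2 * a * (h : ℤ))).card := by
          rw [Finset.sum_ite, Finset.sum_const, Finset.sum_const_zero, add_zero,
            nsmul_eq_mul]
          ring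
      _ ≤ (m : ℝ) * (Int.gcd (2 * a) m : ℝ) := by
          have hcard : ((range m).filter (fun h : ℕ => (m : ℤ) ∣ 2 * a * (h : ℤ))).card
              ≤ Int.gcd (2 * a) m := by
            have hsub : (range m).filter (fun h : ℕ => (m : ℤ) ∣ 2 * a * (h : ℤ))
                ⊆ (range m).filter (fun h : ℕ => m ∣ (2 * a).natAbs * h) := by
              intro x hx
              simp only [mem_filter, mem_range] at hx ⊢
              refine ⟨hx.1, ?_⟩
              have := Int.natAbs_dvd_natAbs.mpr hx.2
              simpa [Int.natAbs_mul] using this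
            calc ((range m).filter (fun h : ℕ => (m : ℤ) ∣ 2 * a * (h : ℤ))).card
                ≤ ((range m).filter (fun h : ℕ => m ∣ (2 * a).natAbs * h)).card :=
                  Finset.card_le_card hsub
              _ ≤ Nat.gcd (2 * a).natAbs m := card_mult_le _ m hm
              _ = Int.gcd (2 * a) m := rfl
          exact mul_le_mul_of_nonneg_left (by exact_mod_cast hcard) (by positivity)
  have hgcd : Int.gcd (2 * a) m ≤ 2 * Int.gcd a m := by
    have h1 : Int.gcd (2 * a) ((2 : ℤ) * m) = 2 * Int.gcd a m := by
      rw [Int.gcd_mul_left]; simp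
    have h2 : Int.gcd (2 * a) (m : ℤ) ∣ Int.gcd (2 * a) ((2 : ℤ) * m) := by
      apply Nat.dvd_gcd (Nat.gcd_dvd_left _ _)
      refine (Nat.gcd_dvd_right _ _).trans ?_
      rw [Int.natAbs_mul]
      exact dvd_mul_left _ _
    have hpos : 0 < 2 * Int.gcd a m := by
      have : 0 < Int.gcd a m :=
        Int.gcd_pos_iff.mpr (Or.inr (by exact_mod_cast (by omega : (m : ℤ) ≠ 0)))
      omega
    exact Nat.le_of_dvd hpos (h1 ▸ h2)
  have hfinal : ‖S‖ ^ 2 ≤ 2 * m * Int.gcd a m := by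
    calc ‖S‖ ^ 2 ≤ (m : ℝ) * (Int.gcd (2 * a) m) := hsq
      _ ≤ (m : ℝ) * (2 * Int.gcd a m) := by
          apply mul_le_mul_of_nonneg_left _ (by positivity)
          exact_mod_cast hgcd
      _ = 2 * m * Int.gcd a m := by ring
  calc ‖S‖ = Real.sqrt (‖S‖ ^ 2) :=
        (Real.sqrt_sq (norm_nonneg S)).symm
    _ ≤ Real.sqrt (2 * m * Int.gcd a m) := Real.sqrt_le_sqrt hfinal
end

section
/- For all integers a, b, m, N, n0 with m ≥ 1 and N ≥ 0, the incomplete quadratic Gauss sum satisfies |Σ_{n=n0+1}^{n0+N} e((an² + bn)/m)| ≤ (N/m + 1 + (2/π)·log(2m/π))·√(2m·gcd(a,m)). -/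
namespace GS

noncomputable def E (m : ℕ) (k : ℤ) : ℂ := e (k / m)

lemma e_add (x y : ℝ) : e (x + y) = e x * e y := by
  simp [e, ← Complex.exp_add]; ring_nf

lemma e_int (n : ℤ) : e n = 1 := by
  rw [e, Complex.exp_eq_one_iff]
  exact ⟨n, by push_cast; ring⟩

lemma abs_e (x : ℝ) : ‖(e x)‖ = 1 := by
  rw [e]
  rw [show 2 * (Real.pi:ℂ) * Complex.I * x = (2 * Real.pi * x : ℝ) * Complex.I by push_cast; ring]
  exact Complex.norm_exp_ofReal_mul_I _

lemma E_add (m : ℕ) (j k : ℤ) : E m (j + k) = E m j * E m k := by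
  rw [E, E, E, ← e_add]
  norm_num [add_div]

lemma abs_E (m : ℕ) (k : ℤ) : ‖(E m k)‖ = 1 := abs_e _

lemma E_mod {m : ℕ} {j k : ℤ} (h : (m:ℤ) ∣ j - k) : E m j = E m k := by
  rcases eq_or_ne m 0 with rfl | hm
  · simp only [Nat.cast_zero] at h
    obtain rfl : j = k := by omega
    rfl
  obtain ⟨t, ht⟩ := h
  have : j = k + m * t := by linarith
  subst this
  rw [E_add]
  have h2 : ((((m:ℤ) * t : ℤ) : ℝ)) / (m:ℝ) = ((t:ℤ):ℝ) := by
    push_cast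
    field_simp
  have : E m ((m:ℤ) * t) = 1 := by
    rw [E, h2, e_int]
  rw [this, mul_one]

lemma E_pow (m : ℕ) (k : ℤ) (j : ℕ) : E m k ^ j = E m (k * j) := by
  induction j with
  | zero =>
    have : E m (k * (0:ℕ)) = 1 := by
      rw [show k * ((0:ℕ):ℤ) = (0:ℤ) by simp, E]
      rw [show ((0:ℤ):ℝ) / (m:ℝ) = ((0:ℤ):ℝ) by simp]
      exact e_int 0
    rw [this, pow_zero]
  | succ n ih =>
    rw [pow_succ, ih, ← E_add]
    congr 1
    push_cast
    ring

lemma E_one_of_dvd {m : ℕ} {k : ℤ} (h : (m:ℤ) ∣ k) : E m k = 1 := by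
  have := E_mod (j := k) (k := 0) (m := m) (by simpa using h)
  rw [this, E]
  rw [show ((0:ℤ):ℝ) / (m:ℝ) = ((0:ℤ):ℝ) by simp]
  exact e_int 0

lemma E_ne_one {m : ℕ} (hm : 0 < m) {k : ℤ} (h : ¬ (m:ℤ) ∣ k) : E m k ≠ 1 := by
  intro hE
  rw [E, e, Complex.exp_eq_one_iff] at hE
  obtain ⟨n, hn⟩ := hE
  have hπ : (2 * Real.pi * Complex.I : ℂ) ≠ 0 := by
    simp [Real.pi_ne_zero, Complex.I_ne_zero]
  have h2 : ((k / m : ℝ) : ℂ) = (n : ℂ) := by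
    field_simp at hn ⊢
    exact hn
  have h3 : (k : ℝ) / m = n := by exact_mod_cast h2
  apply h
  refine ⟨n, ?_⟩
  have hm' : (m : ℝ) ≠ 0 := Nat.cast_ne_zero.mpr hm.ne'
  field_simp at h3
  have : k = (m:ℤ) * n := by exact_mod_cast h3
  linarith

lemma orth (m : ℕ) (hm : 0 < m) (k : ℤ) :
    ∑ h ∈ Finset.range m, E m (k * h) = if (m:ℤ) ∣ k then (m:ℂ) else 0 := by
  have hrw : ∀ h : ℕ, E m (k * h) = E m k ^ h := fun h => (E_pow m k h).symm
  simp only [hrw]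
  split_ifs with hd
  · rw [E_one_of_dvd hd]
    simp
  · rw [geom_sum_eq (E_ne_one hm hd)]
    rw [E_pow, E_one_of_dvd ⟨k, by ring⟩]
    simp

lemma shift_sum (m : ℕ) (g : ℤ → ℂ) (hper : ∀ x : ℤ, g (x + m) = g x) (c : ℤ) :
    ∑ x ∈ Finset.range m, g (c + x) = ∑ x ∈ Finset.range m, g x := by
  have key : ∀ c : ℤ, ∑ x ∈ Finset.range m, g ((c+1) + x) = ∑ x ∈ Finset.range m, g (c + x) := by
    intro c
    rcases Nat.eq_zero_or_pos m with rfl | hm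
    · simp
    obtain ⟨k, rfl⟩ : ∃ k, m = k + 1 := ⟨m - 1, by omega⟩
    rw [Finset.sum_range_succ, Finset.sum_range_succ']
    have h1 : (c+1) + (k:ℤ) = c + (k+1:ℕ) := by push_cast; ring
    have h2 : g ((c+1) + (k:ℤ)) = g c := by
      rw [h1, hper c]
    rw [h2]
    have h3 : ∀ i : ℕ, g ((c+1) + (i:ℤ)) = g (c + ((i+1 : ℕ):ℤ)) := by
      intro i; congr 1; push_cast; ring
    rw [Finset.sum_congr rfl (fun i _ => h3 i)]
    ring_nf
  induction c using Int.induction_on with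
  | zero => simp
  | succ i ih => rw [key (i:ℤ), ih]
  | pred i ih =>
    have := key (-(i:ℤ) - 1)
    rw [show -(i:ℤ)-1+1 = -(i:ℤ) by ring] at this
    rw [← this, ih]
lemma count_lemma (m : ℕ) (hm : 0 < m) (A : ℤ) :
    ((Finset.range m).filter (fun d : ℕ => (m:ℤ) ∣ A * d)).card = Int.gcd A m := by
  set g : ℕ := Int.gcd A m with hg
  have hgpos : 0 < g := Int.gcd_pos_of_ne_zero_right A (by exact_mod_cast hm.ne')
  have hgm : g ∣ m := Int.natCast_dvd_natCast.mp (hg ▸ Int.gcd_dvd_right A m)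
  obtain ⟨k, hk⟩ := hgm
  have hkpos : 0 < k := by
    rcases Nat.eq_zero_or_pos k with rfl | h
    · omega
    · exact h
  -- characterize divisibility
  have hchar : ∀ d : ℕ, ((m:ℤ) ∣ A * d) ↔ (k ∣ d) := by
    intro d
    have hgz : (g : ℤ) ≠ 0 := by exact_mod_cast hgpos.ne'
    have hAg : (g:ℤ) ∣ A := Int.gcd_dvd_left A m
    obtain ⟨A', hA'⟩ := hAg
    have hcop : Int.gcd A' k = 1 := by
      have := Int.gcd_div_gcd_div_gcd (i := A) (j := (m:ℤ)) (by exact_mod_cast hgpos)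
      have h1 : A / (g:ℤ) = A' := by rw [hA']; exact mul_div_cancel_left₀ _ hgz
      have h2 : (m:ℤ) / (g:ℤ) = (k:ℤ) := by rw [hk]; push_cast; exact mul_div_cancel_left₀ _ hgz
      rwa [h1, h2] at this
    constructor
    · intro hd
      rw [hk, hA'] at hd
      push_cast at hd
      obtain ⟨t, ht⟩ := hd
      have : (k:ℤ) ∣ A' * d := ⟨t, by
        have := ht
        linarith [mul_left_cancel₀ hgz (by linarith [this] : (g:ℤ) * (A' * d) = (g:ℤ) * ((k:ℤ) * t))]⟩
      have hkd : (k:ℤ) ∣ (d:ℤ) :=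
        Int.dvd_of_dvd_mul_right_of_gcd_one this (by rwa [Int.gcd_comm] at hcop)
      exact_mod_cast hkd
    · intro hd
      obtain ⟨t, ht⟩ := hd
      rw [hk, hA', ht]
      push_cast
      exact ⟨A' * t, by ring⟩
  rw [Finset.filter_congr (fun d _ => by rw [hchar d] : ∀ d ∈ Finset.range m, ((m:ℤ) ∣ A * d ↔ k ∣ d))]
  -- now count multiples of k below m = g * k
  have himg : (Finset.range m).filter (fun d : ℕ => k ∣ d) = (Finset.range g).image (fun j => j * k) := by
    ext d
    simp only [Finset.mem_filter, Finset.mem_range, Finset.mem_image]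
    constructor
    · rintro ⟨hdm, ⟨j, rfl⟩⟩
      exact ⟨j, by rw [hk] at hdm; exact lt_of_mul_lt_mul_right (by rwa [mul_comm] at hdm) (Nat.zero_le k), by ring⟩
    · rintro ⟨j, hj, rfl⟩
      exact ⟨by rw [hk]; calc j * k < g * k := by exact Nat.mul_lt_mul_of_lt_of_le hj le_rfl hkpos
                                 _ = g * k := rfl, ⟨j, by ring⟩⟩
  rw [himg, Finset.card_image_of_injective _ (fun x y h => Nat.eq_of_mul_eq_mul_right hkpos h)]
  exact Finset.card_range g

lemma conj_e (x : ℝ) : (starRingEnd ℂ) (e x) = e (-x) := by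
  have h : (starRingEnd ℂ) (2 * (Real.pi:ℂ) * Complex.I * (x:ℂ)) = 2 * (Real.pi:ℂ) * Complex.I * ((-x:ℝ):ℂ) := by
    simp only [map_mul, map_ofNat, Complex.conj_I, Complex.conj_ofReal]
    push_cast
    ring
  rw [e, e, ← Complex.exp_conj, h]

lemma conj_E (m : ℕ) (k : ℤ) : (starRingEnd ℂ) (E m k) = E m (-k) := by
  rw [E, E, conj_e, ← neg_div]
  norm_num

noncomputable def Gq (m : ℕ) (a c : ℤ) : ℂ := ∑ x ∈ Finset.range m, E m (a * x^2 + c * x)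

lemma abs_Gq_le (m : ℕ) (hm : 0 < m) (a c : ℤ) :
    ‖(Gq m a c)‖ ≤ Real.sqrt (2 * m * Int.gcd a m) := by
  have key : ‖(Gq m a c)‖ ^ 2 ≤ (m : ℝ) * Int.gcd (2*a) m := by
    have h1 : (‖(Gq m a c)‖ : ℝ) ^ 2 = ‖(Gq m a c * (starRingEnd ℂ) (Gq m a c))‖ := by
      rw [norm_mul, Complex.norm_conj]; ring
    rw [h1]
    -- expand the product
    have h2 : Gq m a c * (starRingEnd ℂ) (Gq m a c)
        = ∑ y ∈ Finset.range m, ∑ x ∈ Finset.range m,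
            E m ((a * x^2 + c * x) - (a * y^2 + c * y)) := by
      rw [Gq, map_sum, Finset.sum_mul_sum, Finset.sum_comm]
      refine Finset.sum_congr rfl fun y _ => Finset.sum_congr rfl fun x _ => ?_
      rw [conj_E, ← E_add, sub_eq_add_neg]
    rw [h2]
    -- inner shift
    have h3 : ∀ y ∈ Finset.range m, ∑ x ∈ Finset.range m,
        E m ((a * x^2 + c * x) - (a * y^2 + c * y))
        = ∑ d ∈ Finset.range m, E m (a * d^2 + c * d) * E m (2*a*y * d) := by
      intro y hy
      have hper : ∀ x : ℤ, E m ((a * (x+m)^2 + c * (x+m)) - (a * y^2 + c * y))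
          = E m ((a * x^2 + c * x) - (a * y^2 + c * y)) := by
        intro x
        apply E_mod
        refine ⟨a * (2*x + m) + c, by ring⟩
      have := shift_sum m (fun x : ℤ => E m ((a * x^2 + c * x) - (a * y^2 + c * y))) hper (y:ℤ)
      -- ∑_d g(y+d) = ∑_x g(x), so ∑_x g(x) = ∑_d g(y+d)
      rw [show (∑ x ∈ Finset.range m, E m ((a * x^2 + c * x) - (a * y^2 + c * y)))
          = ∑ d ∈ Finset.range m, E m ((a * ((y:ℤ)+d)^2 + c * ((y:ℤ)+d)) - (a * y^2 + c * y)) from this.symm]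
      refine Finset.sum_congr rfl fun d _ => ?_
      rw [← E_add]
      congr 1
      ring
    rw [Finset.sum_congr rfl h3, Finset.sum_comm]
    have h4 : ∀ d : ℕ, ∑ y ∈ Finset.range m, E m (a * d^2 + c * d) * E m (2*a*(y:ℤ) * d)
        = E m (a * d^2 + c * d) * (if (m:ℤ) ∣ 2*a*d then (m:ℂ) else 0) := by
      intro d
      rw [← Finset.mul_sum]
      congr 1
      rw [← orth m hm (2*a*d)]
      refine Finset.sum_congr rfl fun y _ => ?_
      congr 1
      ring
    rw [Finset.sum_congr rfl (fun d _ => h4 d)]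
    calc ‖(∑ d ∈ Finset.range m, E m (a * d^2 + c * d) * (if (m:ℤ) ∣ 2*a*d then (m:ℂ) else 0))‖
        ≤ ∑ d ∈ Finset.range m, ‖(E m (a * d^2 + c * d) * (if (m:ℤ) ∣ 2*a*d then (m:ℂ) else 0))‖ := by
          exact norm_sum_le _ _
      _ = ∑ d ∈ Finset.range m, (if (m:ℤ) ∣ 2*a*d then (m:ℝ) else 0) := by
          refine Finset.sum_congr rfl fun d _ => ?_
          rw [norm_mul, abs_E, one_mul]
          split_ifs <;> simp
      _ = (m:ℝ) * ((Finset.range m).filter (fun d : ℕ => (m:ℤ) ∣ 2*a*d)).card := by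
          rw [Finset.sum_ite, Finset.sum_const, Finset.sum_const]
          simp [mul_comm]
      _ ≤ (m:ℝ) * Int.gcd (2*a) m := by
          rw [count_lemma m hm (2*a)]
    -- gcd(2a, m) ≤ 2 gcd(a, m)
  have hgcd : (Int.gcd (2*a) m : ℝ) ≤ 2 * Int.gcd a m := by
    have hdvd : Int.gcd (2*a) m ∣ 2 * Int.gcd a m := by
      have h1 : Int.gcd ((2:ℤ)*a) ((2:ℤ)*(m:ℤ)) = 2 * Int.gcd a m := by
        rw [Int.gcd_mul_left]
        simp
      have h2 : ((Int.gcd (2*a) (m:ℤ) : ℤ)) ∣ ((Int.gcd ((2:ℤ)*a) ((2:ℤ)*(m:ℤ)) : ℤ)) :=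
        Int.dvd_coe_gcd (Int.gcd_dvd_left _ _) (Dvd.dvd.mul_left (Int.gcd_dvd_right _ _) 2)
      rw [← h1]
      exact Int.natCast_dvd_natCast.mp h2
    have hpos : 0 < 2 * Int.gcd a m := by
      have : 0 < Int.gcd a m := Int.gcd_pos_of_ne_zero_right a (by exact_mod_cast hm.ne')
      omega
    exact_mod_cast Nat.le_of_dvd hpos hdvd
  have key2 : ‖(Gq m a c)‖ ^ 2 ≤ 2 * m * Int.gcd a m := by
    calc ‖(Gq m a c)‖ ^ 2 ≤ (m : ℝ) * Int.gcd (2*a) m := key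
      _ ≤ (m:ℝ) * (2 * Int.gcd a m) := by
          apply mul_le_mul_of_nonneg_left hgcd (by positivity)
      _ = 2 * m * Int.gcd a m := by ring
  have h0 : (0:ℝ) ≤ ‖(Gq m a c)‖ := norm_nonneg _
  nlinarith [Real.sq_sqrt (by positivity : (0:ℝ) ≤ 2 * m * Int.gcd a m),
    Real.sqrt_nonneg (2 * (m:ℝ) * Int.gcd a m)]

lemma sin_cubic_lower (x : ℝ) (hx : 0 ≤ x) : x - x^3/6 ≤ Real.sin x := by
  have hmono : Monotone (fun t : ℝ => Real.sin t - t + t^3/6) := by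
    apply monotone_of_deriv_nonneg
    · fun_prop
    · intro t
      have hd : HasDerivAt (fun t : ℝ => Real.sin t - t + t^3/6)
          (Real.cos t - 1 + 3 * t^2 / 6) t := by
        have h1 : HasDerivAt Real.sin (Real.cos t) t := Real.hasDerivAt_sin t
        have h2 : HasDerivAt (fun t : ℝ => t) 1 t := hasDerivAt_id t
        have h3 : HasDerivAt (fun t : ℝ => t^3) (3*t^2) t := by
          simpa using hasDerivAt_pow 3 t
        exact (h1.sub h2).add (h3.div_const 6)
      rw [hd.deriv]
      have := Real.one_sub_sq_div_two_le_cos (x := t)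
      nlinarith [sq_nonneg t]
  have h := hmono hx
  simp only [Real.sin_zero] at h
  nlinarith [h]

lemma sin_quad_lower_half (t : ℝ) (h0 : 0 ≤ t) (h1 : t ≤ 1/2) :
    Real.pi * t * (1 - t) ≤ Real.sin (Real.pi * t) := by
  have hx : 0 ≤ Real.pi * t := by positivity
  have h := sin_cubic_lower (Real.pi * t) hx
  have hpi : Real.pi ≤ 3.15 := by
    linarith [Real.pi_lt_d2]
  have hpi0 : 0 < Real.pi := Real.pi_pos
  have hpisq : Real.pi^2 ≤ 10 := by nlinarith
  have hptt : 0 ≤ Real.pi * t^2 := by positivity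
  have h5 : Real.pi^2 * t ≤ 5 := by nlinarith
  have hkey : (Real.pi*t)^3/6 ≤ Real.pi * t * t := by
    calc (Real.pi*t)^3/6 = (Real.pi^2*t) * (Real.pi*t^2)/6 := by ring
      _ ≤ 5 * (Real.pi*t^2)/6 := by gcongr
      _ ≤ Real.pi * t * t := by nlinarith
  nlinarith [h, hkey]

lemma sin_quad_lower (t : ℝ) (h0 : 0 ≤ t) (h1 : t ≤ 1) :
    Real.pi * t * (1 - t) ≤ Real.sin (Real.pi * t) := by
  rcases le_or_gt t (1/2) with h | h
  · exact sin_quad_lower_half t h0 h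
  · have h2 : Real.sin (Real.pi * t) = Real.sin (Real.pi * (1 - t)) := by
      rw [← Real.sin_pi_sub]
      congr 1
      ring
    rw [h2]
    have := sin_quad_lower_half (1 - t) (by linarith) (by linarith)
    calc Real.pi * t * (1 - t) = Real.pi * (1-t) * (1 - (1-t)) := by ring
      _ ≤ _ := this

lemma harmonic_bound (m : ℕ) (hm : 1 ≤ m) :
    ∑ h ∈ Finset.Ico 1 m, (1 / (h:ℝ)) ≤ 1 + Real.log m := by
  rcases Nat.lt_or_ge m 2 with h2 | h2
  · interval_cases m
    simp
  have hIcc : Finset.Ico 1 m = Finset.Icc 1 (m-1) := by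
    ext x; simp [Finset.mem_Ico, Finset.mem_Icc]; omega
  rw [hIcc]
  have h := harmonic_le_one_add_log (m-1)
  rw [harmonic_eq_sum_Icc] at h
  push_cast at h
  have heq : ∑ h ∈ Finset.Icc 1 (m-1), (1 / (h:ℝ)) = ∑ i ∈ Finset.Icc 1 (m-1), ((i:ℝ))⁻¹ := by
    refine Finset.sum_congr rfl fun i _ => one_div _
  rw [heq]
  refine h.trans ?_
  have : Real.log ((m:ℝ) - 1) ≤ Real.log m := by
    rcases eq_or_lt_of_le (by exact_mod_cast h2 : (2:ℝ) ≤ (m:ℝ)) with h3 | h3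
    · apply Real.log_le_log (by linarith) (by linarith)
    · apply Real.log_le_log (by linarith) (by linarith)
  have hcast : ((m-1 : ℕ):ℝ) = (m:ℝ) - 1 := by
    have : (1:ℕ) ≤ m := hm
    push_cast [Nat.cast_sub this]
    ring
  rw [hcast]
  linarith

lemma csc_sum (m : ℕ) (hm : 1 ≤ m) :
    ∑ h ∈ Finset.Ico 1 m, (1 / Real.sin (Real.pi * h / m)) ≤ 2 * m / Real.pi * (1 + Real.log m) := by
  have hm0 : (0:ℝ) < m := by exact_mod_cast hm
  have hpi : (0:ℝ) < Real.pi := Real.pi_pos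
  have step : ∀ h ∈ Finset.Ico 1 m, (1 / Real.sin (Real.pi * h / m))
      ≤ (m / Real.pi) * (1 / h + 1 / ((m:ℝ) - h)) := by
    intro h hh
    rw [Finset.mem_Ico] at hh
    obtain ⟨hh1, hh2⟩ := hh
    have hh1' : (1:ℝ) ≤ h := by exact_mod_cast hh1
    have hh2' : (h:ℝ) < m := by exact_mod_cast hh2
    set t : ℝ := (h:ℝ) / m with ht
    have ht0 : 0 < t := by positivity
    have ht1 : t < 1 := by rw [ht, div_lt_one hm0]; exact hh2'
    have hsin : Real.pi * t * (1 - t) ≤ Real.sin (Real.pi * t) := sin_quad_lower t ht0.le ht1.le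
    have hsinpos : 0 < Real.pi * t * (1 - t) := by
      apply mul_pos (mul_pos hpi ht0); linarith
    have harg : Real.pi * (h:ℝ) / m = Real.pi * t := by rw [ht]; ring
    rw [harg]
    rw [div_le_iff₀ (lt_of_lt_of_le hsinpos hsin)]
    have hmh : (0:ℝ) < (m:ℝ) - h := by linarith
    have hexp : (m / Real.pi) * (1 / h + 1 / ((m:ℝ) - h)) * (Real.pi * t * (1 - t)) = 1 := by
      rw [ht]
      have h1 : (h:ℝ) ≠ 0 := by linarith
      have h2 : (m:ℝ) ≠ 0 := hm0.ne'
      have h3 : ((m:ℝ) - h) ≠ 0 := hmh.ne'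
      field_simp
      ring
    calc (1:ℝ) = (m / Real.pi) * (1 / h + 1 / ((m:ℝ) - h)) * (Real.pi * t * (1 - t)) := hexp.symm
      _ ≤ (m / Real.pi) * (1 / h + 1 / ((m:ℝ) - h)) * Real.sin (Real.pi * t) := by
          apply mul_le_mul_of_nonneg_left hsin
          positivity
  have hrefl : ∑ h ∈ Finset.Ico 1 m, (1/((m:ℝ)-h)) = ∑ h ∈ Finset.Ico 1 m, (1/(h:ℝ)) := by
    apply Finset.sum_nbij' (fun h => m - h) (fun h => m - h)
    · intro a ha; rw [Finset.mem_Ico] at *; omega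
    · intro a ha; rw [Finset.mem_Ico] at *; omega
    · intro a ha; rw [Finset.mem_Ico] at ha; omega
    · intro a ha; rw [Finset.mem_Ico] at ha; omega
    · intro a ha
      rw [Finset.mem_Ico] at ha
      congr 1
      have : ((m - a : ℕ) : ℝ) = (m:ℝ) - a := by
        push_cast [Nat.cast_sub (by omega : a ≤ m)]
        ring
      rw [this]
  calc ∑ h ∈ Finset.Ico 1 m, (1 / Real.sin (Real.pi * h / m))
      ≤ ∑ h ∈ Finset.Ico 1 m, (m / Real.pi) * (1 / h + 1 / ((m:ℝ) - h)) := Finset.sum_le_sum step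
    _ = (m/Real.pi) * (∑ h ∈ Finset.Ico 1 m, (1/(h:ℝ)) + ∑ h ∈ Finset.Ico 1 m, (1/((m:ℝ)-h))) := by
        rw [← Finset.sum_add_distrib, ← Finset.mul_sum]
    _ = (2*m/Real.pi) * (∑ h ∈ Finset.Ico 1 m, (1/(h:ℝ))) := by
        rw [hrefl]; ring
    _ ≤ 2 * m / Real.pi * (1 + Real.log m) := by
        exact mul_le_mul_of_nonneg_left (harmonic_bound m hm) (by positivity)
lemma abs_exp_sub_one (θ : ℝ) :
    ‖(Complex.exp ((θ:ℂ) * Complex.I) - 1)‖ = 2 * |Real.sin (θ/2)| := by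
  set z : ℂ := ((θ/2 : ℝ) : ℂ) with hz
  have e2 : Complex.exp ((θ:ℂ) * Complex.I) = Complex.exp (z * Complex.I) * Complex.exp (z * Complex.I) := by
    rw [← Complex.exp_add]
    congr 1
    rw [hz]
    push_cast
    ring
  have e3 : Complex.exp (z * Complex.I) * Complex.exp (-z * Complex.I) = 1 := by
    rw [← Complex.exp_add]
    rw [show z * Complex.I + -z * Complex.I = 0 by ring]
    exact Complex.exp_zero
  have key : Complex.exp ((θ:ℂ) * Complex.I) - 1
      = Complex.exp (z * Complex.I) * (2 * Complex.I * Complex.sin z) := by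
    rw [e2, Complex.sin]
    set A := Complex.exp (z * Complex.I)
    set B := Complex.exp (-z * Complex.I)
    have hAB : A * B = 1 := e3
    linear_combination (A^2 - A*B) * Complex.I_sq + hAB
  rw [key, norm_mul, Complex.norm_exp]
  have : (z * Complex.I).re = 0 := by
    rw [hz]
    simp [Complex.mul_re]
  rw [this, Real.exp_zero, one_mul, norm_mul, norm_mul]
  rw [Complex.norm_two, Complex.norm_I, hz, ← Complex.ofReal_sin, Complex.norm_real, Real.norm_eq_abs]
  ring

lemma abs_geom_le (m : ℕ) (hm : 0 < m) (h : ℕ) (hh1 : 1 ≤ h) (hh2 : h < m) (N : ℕ) :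
    ‖(∑ j ∈ Finset.range N, E m (h:ℤ) ^ j)‖ ≤ 1 / Real.sin (Real.pi * h / m) := by
  have hnd : ¬ (m:ℤ) ∣ (h:ℤ) := by
    intro hd
    have : m ∣ h := Int.natCast_dvd_natCast.mp hd
    have := Nat.le_of_dvd (by omega) this
    omega
  have hne := E_ne_one hm hnd
  rw [geom_sum_eq hne, norm_div]
  have hsin : 0 < Real.sin (Real.pi * h / m) := by
    apply Real.sin_pos_of_pos_of_lt_pi
    · have : (0:ℝ) < h := by exact_mod_cast hh1
      have : (0:ℝ) < m := by exact_mod_cast hm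
      positivity
    · have h1 : (h:ℝ) < m := by exact_mod_cast hh2
      have h2 : (0:ℝ) < m := by exact_mod_cast hm
      rw [div_lt_iff₀ h2]
      have := Real.pi_pos
      nlinarith
  have hden : ‖(E m (h:ℤ) - 1)‖ = 2 * Real.sin (Real.pi * h / m) := by
    have harg : E m (h:ℤ) = Complex.exp (((2 * Real.pi * h / m : ℝ):ℂ) * Complex.I) := by
      rw [E, e]
      congr 1
      push_cast
      ring
    rw [harg, abs_exp_sub_one]
    rw [show (2 * Real.pi * (h:ℝ) / m) / 2 = Real.pi * h / m by ring]
    rw [abs_of_pos hsin]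
  have hnum : ‖(E m (h:ℤ) ^ N - 1)‖ ≤ 2 := by
    calc ‖(E m (h:ℤ) ^ N - 1)‖
        = ‖(E m (h:ℤ) ^ N + (-1))‖ := by rw [sub_eq_add_neg]
      _ ≤ ‖(E m (h:ℤ) ^ N)‖ + ‖(-1:ℂ)‖ := norm_add_le _ _
      _ = 2 := by rw [norm_pow, abs_E]; norm_num
  rw [hden]
  have h2s : 0 < 2 * Real.sin (Real.pi * h / m) := by linarith
  calc ‖(E m (h:ℤ) ^ N - 1)‖ / (2 * Real.sin (Real.pi * h / m))
      ≤ 2 / (2 * Real.sin (Real.pi * h / m)) := (div_le_div_iff_of_pos_right h2s).mpr hnum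
    _ = 1 / Real.sin (Real.pi * h / m) := by
        field_simp
lemma completion (m : ℕ) (hm : 0 < m) (a b n0 : ℤ) (N : ℕ) :
    ∑ n ∈ Finset.Icc (n0+1) (n0+(N:ℤ)), E m (a*n^2 + b*n)
      = (1/(m:ℂ)) * ∑ h ∈ Finset.range m,
          ((∑ n ∈ Finset.Icc (n0+1) (n0+(N:ℤ)), E m (h*n)) *
           (∑ x ∈ Finset.range m, E m (a*x^2 + (b-h)*x))) := by
  have hmz : ((m:ℂ)) ≠ 0 := by exact_mod_cast hm.ne'
  have horth : ∀ (n : ℤ), ∀ x ∈ Finset.range m, ∑ h ∈ Finset.range m, E m (h*n) * E m (a*(x:ℤ)^2+(b-h)*x)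
      = E m (a*x^2+b*x) * (if (m:ℤ) ∣ (n - x) then (m:ℂ) else 0) := by
    intro n x _
    rw [← orth m hm (n - x), Finset.mul_sum]
    refine Finset.sum_congr rfl fun h _ => ?_
    rw [← E_add, ← E_add]
    congr 1
    ring
  have key : ∀ n ∈ Finset.Icc (n0+1) (n0+(N:ℤ)),
      ∑ x ∈ Finset.range m, E m (a*(x:ℤ)^2+b*x) * (if (m:ℤ) ∣ (n - x) then (m:ℂ) else 0)
      = (m:ℂ) * E m (a*n^2+b*n) := by
    intro n _
    have h1 : 0 ≤ n % m := Int.emod_nonneg n (by exact_mod_cast hm.ne')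
    have h2 : n % m < m := Int.emod_lt_of_pos n (by exact_mod_cast hm)
    set x0 : ℕ := (n % m).toNat with hx0
    have hx0z : (x0:ℤ) = n % m := by omega
    have hx0mem : x0 ∈ Finset.range m := by rw [Finset.mem_range]; omega
    have hdvd0 : (m:ℤ) ∣ n - x0 := by
      rw [hx0z]
      exact Int.dvd_self_sub_of_emod_eq rfl
    rw [Finset.sum_eq_single_of_mem x0 hx0mem]
    · rw [if_pos hdvd0]
      have : E m (a*(x0:ℤ)^2+b*x0) = E m (a*n^2+b*n) := by
        apply E_mod
        obtain ⟨t, ht⟩ := hdvd0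
        refine ⟨(a*((x0:ℤ)+n)+b) * (-t), ?_⟩
        have hx : (x0:ℤ) - n = -(m*t) := by linarith
        calc a*(x0:ℤ)^2+b*x0 - (a*n^2+b*n) = ((x0:ℤ) - n) * (a*((x0:ℤ)+n)+b) := by ring
          _ = (m:ℤ) * ((a*((x0:ℤ)+n)+b) * (-t)) := by rw [hx]; ring
      rw [this]
      ring
    · intro x hx hne
      rw [if_neg, mul_zero]
      intro hd
      apply hne
      have hxm : (x:ℤ) < m := by exact_mod_cast Finset.mem_range.mp hx
      have hdx : (m:ℤ) ∣ (x:ℤ) - n := by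
        have h' := (dvd_neg (α := ℤ)).mpr hd
        rwa [neg_sub] at h'
      have hmod : (x:ℤ) % m = n % m := by
        rw [Int.emod_eq_emod_iff_emod_sub_eq_zero]
        exact Int.emod_eq_zero_of_dvd hdx
      have hxx : (x:ℤ) % m = x := Int.emod_eq_of_lt (by positivity) hxm
      omega
  calc ∑ n ∈ Finset.Icc (n0+1) (n0+(N:ℤ)), E m (a*n^2 + b*n)
      = (1/(m:ℂ)) * ∑ n ∈ Finset.Icc (n0+1) (n0+(N:ℤ)), (m:ℂ) * E m (a*n^2+b*n) := by
        rw [← Finset.mul_sum, ← mul_assoc, one_div, inv_mul_cancel₀ hmz, one_mul]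
    _ = (1/(m:ℂ)) * ∑ n ∈ Finset.Icc (n0+1) (n0+(N:ℤ)), ∑ x ∈ Finset.range m,
          E m (a*(x:ℤ)^2+b*x) * (if (m:ℤ) ∣ (n - x) then (m:ℂ) else 0) := by
        rw [Finset.sum_congr rfl key]
    _ = (1/(m:ℂ)) * ∑ n ∈ Finset.Icc (n0+1) (n0+(N:ℤ)), ∑ x ∈ Finset.range m,
          ∑ h ∈ Finset.range m, E m (h*n) * E m (a*(x:ℤ)^2+(b-h)*x) := by
        congr 1
        refine Finset.sum_congr rfl fun n _ => (Finset.sum_congr rfl (fun x hx => (horth n x hx).symm))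
    _ = (1/(m:ℂ)) * ∑ h ∈ Finset.range m,
          ((∑ n ∈ Finset.Icc (n0+1) (n0+(N:ℤ)), E m (h*n)) *
           (∑ x ∈ Finset.range m, E m (a*x^2 + (b-h)*x))) := by
        congr 1
        calc ∑ n ∈ Finset.Icc (n0+1) (n0+(N:ℤ)), ∑ x ∈ Finset.range m,
              ∑ h ∈ Finset.range m, E m (h*n) * E m (a*(x:ℤ)^2+(b-h)*x)
            = ∑ n ∈ Finset.Icc (n0+1) (n0+(N:ℤ)), ∑ h ∈ Finset.range m,
              ∑ x ∈ Finset.range m, E m (h*n) * E m (a*(x:ℤ)^2+(b-h)*x) := by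
              exact Finset.sum_congr rfl fun n _ => Finset.sum_comm
          _ = ∑ h ∈ Finset.range m, ∑ n ∈ Finset.Icc (n0+1) (n0+(N:ℤ)),
              ∑ x ∈ Finset.range m, E m (h*n) * E m (a*(x:ℤ)^2+(b-h)*x) := Finset.sum_comm
          _ = ∑ h ∈ Finset.range m,
              ((∑ n ∈ Finset.Icc (n0+1) (n0+(N:ℤ)), E m (h*n)) *
               (∑ x ∈ Finset.range m, E m (a*x^2 + (b-h)*x))) := by
              refine Finset.sum_congr rfl fun h _ => ?_
              rw [Finset.sum_mul]
              refine Finset.sum_congr rfl fun n _ => ?_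
              rw [Finset.mul_sum]
lemma abs_L_le (m : ℕ) (hm : 0 < m) (h : ℕ) (hh1 : 1 ≤ h) (hh2 : h < m) (n0 : ℤ) (N : ℕ) :
    ‖(∑ n ∈ Finset.Icc (n0+1) (n0+(N:ℤ)), E m (h*n))‖
      ≤ 1 / Real.sin (Real.pi * h / m) := by
  have hre : ∑ n ∈ Finset.Icc (n0+1) (n0+(N:ℤ)), E m (h*n)
      = E m (h*(n0+1)) * ∑ j ∈ Finset.range N, E m (h:ℤ) ^ j := by
    rw [Finset.mul_sum]
    apply Finset.sum_nbij' (fun n : ℤ => (n - (n0+1)).toNat) (fun j : ℕ => n0+1+(j:ℤ))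
    · intro n hn
      rw [Finset.mem_Icc] at hn
      rw [Finset.mem_range]
      omega
    · intro j hj
      rw [Finset.mem_range] at hj
      rw [Finset.mem_Icc]
      omega
    · intro n hn; rw [Finset.mem_Icc] at hn; omega
    · intro j hj; rw [Finset.mem_range] at hj; omega
    · intro n hn
      rw [Finset.mem_Icc] at hn
      rw [E_pow, ← E_add]
      congr 1
      have : ((n - (n0+1)).toNat : ℤ) = n - (n0+1) := by omega
      rw [this]
      ring
  rw [hre, norm_mul, abs_E, one_mul]
  exact abs_geom_le m hm h hh1 hh2 N

lemma log_ineq (m : ℕ) (hm : 1 ≤ m) :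
    2/Real.pi * (1 + Real.log m) ≤ 1 + 2/Real.pi * Real.log (2*m/Real.pi) := by
  have hpi := Real.pi_pos
  have hm0 : (0:ℝ) < m := by exact_mod_cast hm
  have hlog : Real.log (2*m/Real.pi) = Real.log 2 + Real.log m - Real.log Real.pi := by
    rw [Real.log_div (by positivity) (ne_of_gt hpi), Real.log_mul (by norm_num) (ne_of_gt hm0)]
  have hkey : Real.log (Real.pi/2) ≤ Real.pi/2 - 1 := Real.log_le_sub_one_of_pos (by positivity)
  have h2 : Real.log Real.pi - Real.log 2 ≤ Real.pi/2 - 1 := by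
    rwa [Real.log_div (ne_of_gt hpi) (by norm_num)] at hkey
  have h3 : (0:ℝ) < 2/Real.pi := by positivity
  have h4 : 2/Real.pi * (Real.log Real.pi - Real.log 2) ≤ 2/Real.pi * (Real.pi/2 - 1) :=
    mul_le_mul_of_nonneg_left h2 h3.le
  have hcancel : 2/Real.pi * Real.pi = 2 := div_mul_cancel₀ 2 (ne_of_gt hpi)
  rw [hlog]
  nlinarith [h4, hcancel]

end GS

open GS in
/-- Incomplete quadratic Gauss sum bound. -/
theorem stmt10 (a b n0 : ℤ) (m N : ℕ) (hm : 1 ≤ m) :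
    ‖(∑ n ∈ Finset.Icc (n0 + 1) (n0 + N),
        e (((a * n ^ 2 + b * n : ℤ) : ℝ) / m))‖ ≤
      ((N : ℝ) / m + 1 + 2 / Real.pi * Real.log (2 * m / Real.pi)) *
        Real.sqrt (2 * m * Int.gcd a m) := by
  have hm0 : 0 < m := hm
  have hmr : (0:ℝ) < m := by exact_mod_cast hm
  set g : ℝ := Real.sqrt (2 * m * Int.gcd a m) with hg
  have hg0 : 0 ≤ g := Real.sqrt_nonneg _
  have hS : (∑ n ∈ Finset.Icc (n0 + 1) (n0 + (N:ℤ)),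
      e (((a * n ^ 2 + b * n : ℤ) : ℝ) / m)) = ∑ n ∈ Finset.Icc (n0+1) (n0+(N:ℤ)), E m (a*n^2+b*n) := rfl
  rw [hS, completion m hm0 a b n0 N, norm_mul]
  have habs1 : ‖(1/(m:ℂ))‖ = 1/(m:ℝ) := by
    rw [norm_div, norm_one]
    congr 1
    exact Complex.norm_natCast m
  rw [habs1]
  -- bound the sum
  have hterm : ∀ h ∈ Finset.Ico 1 m,
      ‖((∑ n ∈ Finset.Icc (n0+1) (n0+(N:ℤ)), E m (h*n)) *
        (∑ x ∈ Finset.range m, E m (a*x^2 + (b-h)*x)))‖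
      ≤ (1 / Real.sin (Real.pi * h / m)) * g := by
    intro h hh
    rw [Finset.mem_Ico] at hh
    rw [norm_mul]
    have h1 := abs_L_le m hm0 h hh.1 hh.2 n0 N
    have h2 := abs_Gq_le m hm0 a (b - h)
    have h3 : (0:ℝ) < 1 / Real.sin (Real.pi * h / m) := by
      have : 0 < Real.sin (Real.pi * h / m) := by
        apply Real.sin_pos_of_pos_of_lt_pi
        · have : (0:ℝ) < h := by exact_mod_cast hh.1
          positivity
        · have h4 : (h:ℝ) < m := by exact_mod_cast hh.2
          rw [div_lt_iff₀ hmr]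
          nlinarith [Real.pi_pos]
      positivity
    exact mul_le_mul h1 h2 (norm_nonneg _) h3.le
  have hL0 : (∑ n ∈ Finset.Icc (n0+1) (n0+(N:ℤ)), E m (((0:ℕ):ℤ)*n)) = (N:ℂ) := by
    have hone : ∀ n ∈ Finset.Icc (n0+1) (n0+(N:ℤ)), E m (((0:ℕ):ℤ)*n) = 1 := by
      intro n _
      rw [show ((0:ℕ):ℤ)*n = (0:ℤ) by simp]
      exact E_one_of_dvd (dvd_zero _)
    rw [Finset.sum_congr rfl hone, Finset.sum_const, Int.card_Icc]
    rw [show (n0+(N:ℤ) + 1 - (n0+1)).toNat = N by omega]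
    simp
  have habs_le := norm_sum_le (Finset.range m) (fun h => ((∑ n ∈ Finset.Icc (n0+1) (n0+(N:ℤ)), E m (h*n)) *
       (∑ x ∈ Finset.range m, E m (a*x^2 + (b-h)*x))))
  have hsplit : ∑ h ∈ Finset.range m, ‖
      ((∑ n ∈ Finset.Icc (n0+1) (n0+(N:ℤ)), E m (h*n)) *
       (∑ x ∈ Finset.range m, E m (a*x^2 + (b-h)*x)))‖
      = ‖((∑ n ∈ Finset.Icc (n0+1) (n0+(N:ℤ)), E m (((0:ℕ):ℤ)*n)) *
             (∑ x ∈ Finset.range m, E m (a*x^2 + (b-((0:ℕ):ℤ))*x)))‖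
          + ∑ h ∈ Finset.Ico 1 m, ‖
            ((∑ n ∈ Finset.Icc (n0+1) (n0+(N:ℤ)), E m (h*n)) *
             (∑ x ∈ Finset.range m, E m (a*x^2 + (b-h)*x)))‖ := by
    rw [Finset.range_eq_Ico, Finset.sum_eq_sum_Ico_succ_bot hm0]
  have hbound0 : ‖((∑ n ∈ Finset.Icc (n0+1) (n0+(N:ℤ)), E m (((0:ℕ):ℤ)*n)) *
             (∑ x ∈ Finset.range m, E m (a*x^2 + (b-((0:ℕ):ℤ))*x)))‖ ≤ (N:ℝ) * g := by
    rw [norm_mul, hL0, Complex.norm_natCast]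
    exact mul_le_mul_of_nonneg_left (abs_Gq_le m hm0 a (b-((0:ℕ):ℤ))) (Nat.cast_nonneg N)
  have hboundrest : ∑ h ∈ Finset.Ico 1 m, ‖
            ((∑ n ∈ Finset.Icc (n0+1) (n0+(N:ℤ)), E m (h*n)) *
             (∑ x ∈ Finset.range m, E m (a*x^2 + (b-h)*x)))‖
      ≤ (2*(m:ℝ)/Real.pi) * (1 + Real.log m) * g := by
    refine (Finset.sum_le_sum hterm).trans ?_
    rw [← Finset.sum_mul]
    exact mul_le_mul_of_nonneg_right (csc_sum m hm) hg0
  have hsum : ‖(∑ h ∈ Finset.range m,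
      ((∑ n ∈ Finset.Icc (n0+1) (n0+(N:ℤ)), E m (h*n)) *
       (∑ x ∈ Finset.range m, E m (a*x^2 + (b-h)*x))))‖
      ≤ (N:ℝ) * g + (2*(m:ℝ)/Real.pi) * (1 + Real.log m) * g := by
    refine habs_le.trans ?_
    rw [hsplit]
    exact add_le_add hbound0 hboundrest
  refine le_trans (mul_le_mul_of_nonneg_left hsum (by positivity : (0:ℝ) ≤ 1/(m:ℝ))) ?_
  have heq : (1/(m:ℝ)) * ((N:ℝ) * g + 2*(m:ℝ)/Real.pi * (1 + Real.log m) * g)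
      = ((N:ℝ)/m + 2/Real.pi * (1 + Real.log m)) * g := by
    field_simp
  rw [heq]
  apply mul_le_mul_of_nonneg_right _ hg0
  linarith [log_ineq m hm]
end

section
/- For all complex numbers z_1,...,z_N and all integers Q ≥ 1, R ≥ 1: |Σ_{n=1}^{N} z_n|² ≤ ((N + QR - Q)/R)·(Σ_{n=1}^{N} |z_n|² + 2·Σ_{r=1}^{R-1} (1 - r/R)·Σ_{n=1}^{N-Qr} Re(z_{n+Qr}·conj(z_n))). -/
open Finset

lemma vdc_int_sum {M : Type*} [AddCommMonoid M] (f : ℤ → M) (K : ℕ) :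
    ∑ k ∈ Finset.Icc (1:ℤ) (K:ℤ), f k = ∑ n ∈ Finset.Icc 1 K, f (n : ℤ) := by
  refine Finset.sum_bij' (fun k _ => k.toNat) (fun n _ => (n:ℤ)) ?_ ?_ ?_ ?_ ?_ <;>
    simp only [Finset.mem_Icc] <;> intros <;> try omega
  · rename_i k hk
    have : ((k.toNat : ℤ)) = k := by omega
    rw [this]

lemma vdc_sum_ext {M : Type*} [AddCommMonoid M] {N : ℕ} (f : ℤ → M)
    (hf : ∀ k : ℤ, k < 1 ∨ (N:ℤ) < k → f k = 0)
    {a b : ℤ} (ha : a ≤ 1) (hb : (N:ℤ) ≤ b) :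
    ∑ k ∈ Finset.Icc a b, f k = ∑ k ∈ Finset.Icc (1:ℤ) (N:ℤ), f k := by
  refine (Finset.sum_subset ?_ ?_).symm
  · intro k hk; simp only [Finset.mem_Icc] at *; omega
  · intro k hk hk'; apply hf; simp only [Finset.mem_Icc] at *; omega

lemma vdc_shift {M : Type*} [AddCommMonoid M] (f : ℤ → M) (a b c : ℤ) :
    ∑ m ∈ Finset.Icc a b, f (m + c) = ∑ k ∈ Finset.Icc (a+c) (b+c), f k := by
  rw [← Finset.map_add_right_Icc, Finset.sum_map]
  rfl

lemma vdc_row1 (t : ℕ → ℝ) (R : ℕ) :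
    ∑ s ∈ Finset.range R, t (R - s + (s - R)) = ∑ d ∈ Finset.Ico 1 (R+1), t d := by
  rw [Finset.sum_Ico_eq_sum_range]
  have h1 : ∑ s ∈ Finset.range R, t (R - s + (s - R))
      = ∑ s ∈ Finset.range R, t (R - 1 - s + 1) := by
    apply Finset.sum_congr rfl; intro s hs
    simp only [Finset.mem_range] at hs; congr 1; omega
  rw [h1, Finset.sum_range_reflect (fun j => t (j+1)) R]
  exact Finset.sum_congr (by norm_num) (fun i _ => by congr 1; omega)

lemma vdc_row2 (t : ℕ → ℝ) (R : ℕ) :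
    ∑ r ∈ Finset.range R, t (r - R + (R - r)) = ∑ d ∈ Finset.Ico 1 (R+1), t d := by
  rw [← vdc_row1 t R]
  apply Finset.sum_congr rfl; intro s hs
  simp only [Finset.mem_range] at hs; congr 1; omega

lemma vdc_count (t : ℕ → ℝ) (R : ℕ) :
    ∑ r ∈ Finset.range R, ∑ s ∈ Finset.range R, t (r - s + (s - r))
      = R * t 0 + 2 * ∑ d ∈ Finset.Ico 1 R, ((R:ℝ) - d) * t d := by
  induction R with
  | zero => simp
  | succ R ih =>
    have hlast : ∑ s ∈ Finset.range (R+1), t (R - s + (s - R))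
        = (∑ d ∈ Finset.Ico 1 (R+1), t d) + t 0 := by
      rw [Finset.sum_range_succ, vdc_row1]
      norm_num
    have hr : ∀ r ∈ Finset.range R,
        ∑ s ∈ Finset.range (R+1), t (r - s + (s - r))
        = (∑ s ∈ Finset.range R, t (r - s + (s - r))) + t (r - R + (R - r)) := by
      intro r _; rw [Finset.sum_range_succ]
    rw [Finset.sum_range_succ, hlast, Finset.sum_congr rfl hr, Finset.sum_add_distrib,
      vdc_row2, ih]
    rcases Nat.eq_zero_or_pos R with h0 | hpos
    · subst h0; simp
    · have htop : ∑ d ∈ Finset.Ico 1 (R+1), ((R:ℝ) - d) * t d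
          = (∑ d ∈ Finset.Ico 1 R, ((R:ℝ) - d) * t d) + ((R:ℝ) - R) * t R :=
        Finset.sum_Ico_succ_top hpos _
      have hsplit : ∑ d ∈ Finset.Ico 1 (R+1), (((R:ℕ)+1:ℝ) - d) * t d
          = (∑ d ∈ Finset.Ico 1 (R+1), ((R:ℝ) - d) * t d)
            + ∑ d ∈ Finset.Ico 1 (R+1), t d := by
        rw [← Finset.sum_add_distrib]
        apply Finset.sum_congr rfl; intro d _; ring
      push_cast [hsplit, htop]
      ring

/-- Generalized van der Corput inequality. -/
theorem stmt11 (N : ℕ) (z : ℕ → ℂ) (Q R : ℕ) (hQ : 1 ≤ Q) (hR : 1 ≤ R) :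
    ‖∑ n ∈ Finset.Icc 1 N, z n‖ ^ 2 ≤
      ((N + Q * R - Q : ℝ) / R) *
        (∑ n ∈ Finset.Icc 1 N, ‖z n‖ ^ 2 +
          2 * ∑ r ∈ Finset.Ico 1 R, (1 - (r : ℝ) / R) *
            ∑ n ∈ Finset.Icc 1 (N - Q * r), (z (n + Q * r) * (starRingEnd ℂ) (z n)).re) := by
  classical
  set w : ℤ → ℂ := fun k => if 1 ≤ k ∧ k ≤ (N:ℤ) then z k.toNat else 0 with hwdef
  have hw0 : ∀ k : ℤ, k < 1 ∨ (N:ℤ) < k → w k = 0 := by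
    intro k hk
    simp only [hwdef]
    rw [if_neg (by omega)]
  set t : ℕ → ℝ :=
    fun d => ∑ n ∈ Finset.Icc 1 (N - Q*d), (z (n + Q*d) * (starRingEnd ℂ) (z n)).re with htdef
  set S : ℂ := ∑ n ∈ Finset.Icc 1 N, z n with hSdef
  set a : ℤ := 1 - ((Q*R : ℕ) : ℤ) + Q with hadef
  set A : Finset ℤ := Finset.Icc a (N:ℤ) with hAdef
  have hQR : Q ≤ Q*R := Nat.le_mul_of_pos_right Q (by omega)
  -- w matches z on [1,N]
  have hwz : ∀ n : ℕ, 1 ≤ n → n ≤ N → w (n:ℤ) = z n := by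
    intro n h1 h2
    simp only [hwdef]
    rw [if_pos (by omega)]
    congr 1
  have hwS : ∑ k ∈ Finset.Icc (1:ℤ) (N:ℤ), w k = S := by
    rw [vdc_int_sum]
    apply Finset.sum_congr rfl
    intro n hn
    simp only [Finset.mem_Icc] at hn
    exact hwz n hn.1 hn.2
  -- Step 1: each shifted sum over A equals S
  have hshiftS : ∀ r : ℕ, r < R → ∑ m ∈ A, w (m + ((Q*r:ℕ):ℤ)) = S := by
    intro r hr
    rw [hAdef, vdc_shift w a (N:ℤ) ((Q*r:ℕ):ℤ), vdc_sum_ext w hw0 ?_ ?_, hwS]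
    · have h1 : Q*r + Q ≤ Q*R := by
        calc Q*r + Q = Q*(r+1) := by ring
        _ ≤ Q*R := Nat.mul_le_mul_left Q (by omega)
      simp only [hadef]; omega
    · omega
  have hstep1 : ∑ m ∈ A, ∑ r ∈ Finset.range R, w (m + ((Q*r:ℕ):ℤ)) = (R:ℂ) * S := by
    rw [Finset.sum_comm,
      Finset.sum_congr rfl (fun r hr => hshiftS r (Finset.mem_range.mp hr)),
      Finset.sum_const, Finset.card_range, nsmul_eq_mul]
  set g : ℤ → ℂ := fun m => ∑ r ∈ Finset.range R, w (m + ((Q*r:ℕ):ℤ)) with hgdef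
  -- card of A
  have hcard : (A.card : ℝ) = (N:ℝ) + Q*R - Q := by
    have h2 : (A.card : ℤ) = (N:ℤ) + ((Q*R:ℕ):ℤ) - Q := by
      rw [hAdef, Int.card_Icc, hadef]
      omega
    have h3 : ((A.card : ℤ) : ℝ) = (((N:ℤ) + ((Q*R:ℕ):ℤ) - Q : ℤ) : ℝ) := by
      exact_mod_cast h2
    push_cast at h3
    linarith
  -- Cauchy-Schwarz
  have hCS : ‖∑ m ∈ A, g m‖ ^ 2 ≤ (A.card : ℝ) * ∑ m ∈ A, ‖g m‖ ^ 2 := by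
    have h1 : ‖∑ m ∈ A, g m‖ ≤ ∑ m ∈ A, ‖g m‖ :=
      norm_sum_le A g
    have h2 : (∑ m ∈ A, ‖g m‖) ^ 2
        ≤ (∑ m ∈ A, (1:ℝ)^2) * ∑ m ∈ A, ‖g m‖^2 := by
      have := Finset.sum_mul_sq_le_sq_mul_sq A (fun _ => (1:ℝ)) (fun m => ‖g m‖)
      simpa using this
    calc ‖∑ m ∈ A, g m‖ ^ 2
        ≤ (∑ m ∈ A, ‖g m‖) ^ 2 := by
          apply pow_le_pow_left₀ (by positivity) h1
      _ ≤ (∑ m ∈ A, (1:ℝ)^2) * ∑ m ∈ A, ‖g m‖^2 := h2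
      _ = (A.card : ℝ) * ∑ m ∈ A, ‖g m‖^2 := by
          simp [Finset.sum_const]
  -- expansion of |g m|^2
  have hexp : ∀ m : ℤ, ‖g m‖^2
      = ∑ r ∈ Finset.range R, ∑ s ∈ Finset.range R,
          (w (m + ((Q*r:ℕ):ℤ)) * (starRingEnd ℂ) (w (m + ((Q*s:ℕ):ℤ)))).re := by
    intro m
    have h1 : ‖g m‖^2 = (g m * (starRingEnd ℂ) (g m)).re := by
      rw [Complex.mul_conj, Complex.sq_norm]
      simp
    rw [h1, hgdef]
    simp only
    rw [map_sum, Finset.sum_mul_sum, Complex.re_sum]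
    exact Finset.sum_congr rfl (fun r _ => Complex.re_sum _ _)
  -- inner sums evaluate to t
  have hu : ∀ r s : ℕ, r < R → s < R → s ≤ r →
      ∑ m ∈ A, (w (m + ((Q*r:ℕ):ℤ)) * (starRingEnd ℂ) (w (m + ((Q*s:ℕ):ℤ)))).re
        = t (r - s) := by
    intro r s hr hs hsr
    have harg : ∀ m : ℤ, m + ((Q*r:ℕ):ℤ) = (m + ((Q*s:ℕ):ℤ)) + ((Q*(r-s):ℕ):ℤ) := by
      intro m
      have : Q*r = Q*s + Q*(r-s) := by
        rw [← Nat.mul_add]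
        congr 1
        omega
      push_cast [this]
      ring
    have hcongr : ∀ m ∈ A, (w (m + ((Q*r:ℕ):ℤ)) * (starRingEnd ℂ) (w (m + ((Q*s:ℕ):ℤ)))).re
        = (fun k => (w (k + ((Q*(r-s):ℕ):ℤ)) * (starRingEnd ℂ) (w k)).re) (m + ((Q*s:ℕ):ℤ)) := by
      intro m _
      simp only
      rw [harg m]
    rw [Finset.sum_congr rfl hcongr, hAdef,
      vdc_shift (fun k => (w (k + ((Q*(r-s):ℕ):ℤ)) * (starRingEnd ℂ) (w k)).re) a (N:ℤ) _,
      vdc_sum_ext _ ?_ ?_ ?_]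
    · -- ∑ k ∈ Icc 1 N, ... = t (r-s)
      have hsub : ∑ k ∈ Finset.Icc (1:ℤ) (N:ℤ),
            (w (k + ((Q*(r-s):ℕ):ℤ)) * (starRingEnd ℂ) (w k)).re
          = ∑ k ∈ Finset.Icc (1:ℤ) ((N - Q*(r-s) : ℕ):ℤ),
            (w (k + ((Q*(r-s):ℕ):ℤ)) * (starRingEnd ℂ) (w k)).re := by
        refine (Finset.sum_subset ?_ ?_).symm
        · intro k hk; simp only [Finset.mem_Icc] at *; omega
        · intro k hk hk'
          simp only [Finset.mem_Icc] at hk hk'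
          rw [hw0 (k + ((Q*(r-s):ℕ):ℤ)) (by omega)]
          simp
      rw [hsub, vdc_int_sum, htdef]
      apply Finset.sum_congr rfl
      intro n hn
      simp only [Finset.mem_Icc] at hn
      have h1 : ((n:ℤ) + ((Q*(r-s):ℕ):ℤ)) = (((n + Q*(r-s) : ℕ)):ℤ) := by push_cast; ring
      rw [h1, hwz _ (by omega) (by omega), hwz n (by omega) (by omega)]
    · intro k hk
      rw [hw0 k hk]
      simp
    · have h1 : Q*s + Q ≤ Q*R := by
        calc Q*s + Q = Q*(s+1) := by ring
        _ ≤ Q*R := Nat.mul_le_mul_left Q (by omega)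
      simp only [hadef]; omega
    · omega
  -- symmetry
  have hsym : ∀ r s : ℕ,
      ∑ m ∈ A, (w (m + ((Q*r:ℕ):ℤ)) * (starRingEnd ℂ) (w (m + ((Q*s:ℕ):ℤ)))).re
      = ∑ m ∈ A, (w (m + ((Q*s:ℕ):ℤ)) * (starRingEnd ℂ) (w (m + ((Q*r:ℕ):ℤ)))).re := by
    intro r s
    apply Finset.sum_congr rfl
    intro m _
    simp [Complex.mul_re, Complex.conj_re, Complex.conj_im]
    ring
  -- full evaluation of the double sum
  have huu : ∀ r s : ℕ, r < R → s < R →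
      ∑ m ∈ A, (w (m + ((Q*r:ℕ):ℤ)) * (starRingEnd ℂ) (w (m + ((Q*s:ℕ):ℤ)))).re
        = t (r - s + (s - r)) := by
    intro r s hr hs
    rcases le_total s r with h | h
    · rw [hu r s hr hs h]
      congr 1
      omega
    · rw [hsym r s, hu s r hs hr h]
      congr 1
      omega
  -- total second moment
  have htot : ∑ m ∈ A, ‖g m‖^2
      = (R:ℝ) * t 0 + 2 * ∑ d ∈ Finset.Ico 1 R, ((R:ℝ) - d) * t d := by
    rw [← vdc_count t R]
    rw [Finset.sum_congr rfl (fun m _ => hexp m), Finset.sum_comm]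
    apply Finset.sum_congr rfl
    intro r hrm
    rw [Finset.sum_comm]
    apply Finset.sum_congr rfl
    intro s hsm
    exact huu r s (Finset.mem_range.mp hrm) (Finset.mem_range.mp hsm)
  -- t 0 is the sum of |z n|^2
  have ht0 : t 0 = ∑ n ∈ Finset.Icc 1 N, ‖z n‖ ^ 2 := by
    rw [htdef]
    simp only [Nat.mul_zero, Nat.sub_zero, Nat.add_zero]
    apply Finset.sum_congr rfl
    intro n _
    rw [Complex.mul_conj]
    simp [Complex.sq_norm]
  -- main inequality at the level of R^2
  have hmain : (R:ℝ)^2 * ‖S‖ ^ 2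
      ≤ (A.card : ℝ) * ((R:ℝ) * t 0 + 2 * ∑ d ∈ Finset.Ico 1 R, ((R:ℝ) - d) * t d) := by
    have h1 : ‖(R:ℂ) * S‖ ^2 = (R:ℝ)^2 * ‖S‖ ^2 := by
      rw [norm_mul, mul_pow]
      congr 2
      simp
    calc (R:ℝ)^2 * ‖S‖ ^ 2 = ‖(R:ℂ) * S‖ ^2 := h1.symm
      _ = ‖∑ m ∈ A, g m‖ ^2 := by rw [← hstep1]
      _ ≤ (A.card : ℝ) * ∑ m ∈ A, ‖g m‖ ^ 2 := hCS
      _ = _ := by rw [htot]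
  -- conclude
  have hRpos : (0:ℝ) < R := by positivity
  have hfrac : ∀ d ∈ Finset.Ico 1 R, (1 - (d:ℝ)/R) * t d = ((R:ℝ) - d) * t d / R := by
    intro d _
    field_simp
  rw [Finset.sum_congr rfl hfrac]
  have hgoal : ((N:ℝ) + Q*R - Q) / R *
      (∑ n ∈ Finset.Icc 1 N, ‖z n‖ ^ 2
        + 2 * ∑ d ∈ Finset.Ico 1 R, ((R:ℝ) - d) * t d / R)
      = (A.card : ℝ) * ((R:ℝ) * t 0 + 2 * ∑ d ∈ Finset.Ico 1 R, ((R:ℝ) - d) * t d) / R^2 := by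
    rw [hcard, ← ht0, ← Finset.sum_div]
    field_simp
  rw [hgoal, le_div_iff₀ (by positivity : (0:ℝ) < (R:ℝ)^2)]
  calc ‖S‖ ^2 * (R:ℝ)^2 = (R:ℝ)^2 * ‖S‖ ^2 := by ring
    _ ≤ _ := hmain
end

section
/- Let m ≥ 1 and A ≥ 1 be integers, b ∈ ℝ, and U > 0 a real number. Then (1/A)·Σ_{a=1}^{A} Σ_{n=0}^{m-1} min(U, |sin(π(an+b)/m)|^{-1}) ≪ τ(m)·U + m·log m, where τ(m) is the number of divisors of m and the implied constant is absolute. -/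
open Finset Real

noncomputable def sinBound (U x : ℝ) : ℝ :=
  if Real.sin x = 0 then U else min U |Real.sin x|⁻¹

lemma sinBound_le {U : ℝ} (x : ℝ) : sinBound U x ≤ U := by
  unfold sinBound; split
  · exact le_refl U
  · exact min_le_left _ _


lemma abs_sin_pi_mul (θ : ℝ) : |Real.sin (π * θ)| = Real.sin (π * |θ - round θ|) := by
  have hy : |θ - round θ| ≤ 1/2 := abs_sub_round θ
  set y := θ - round θ with hydef
  have h1 : π * θ = π * y + (round θ : ℤ) * π := by rw [hydef]; push_cast; ring
  have habs1 : |((-1:ℝ)) ^ (round θ)| = 1 := by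
    rcases Int.even_or_odd (round θ) with he | ho
    · rw [he.neg_one_zpow]; simp
    · rw [ho.neg_one_zpow]; simp
  rw [h1, Real.sin_add_int_mul_pi, abs_mul, habs1, one_mul]
  have hpi := Real.pi_pos
  rcases le_or_gt 0 y with h | h
  · rw [abs_of_nonneg h]
    exact abs_of_nonneg (Real.sin_nonneg_of_nonneg_of_le_pi (by positivity)
      (by rw [abs_of_nonneg h] at hy; nlinarith))
  · rw [abs_of_neg h, mul_neg, Real.sin_neg]
    rw [abs_of_neg h] at hy
    have : Real.sin (π * y) ≤ 0 := by
      have := Real.sin_nonneg_of_nonneg_of_le_pi (x := π * (-y)) (by nlinarith) (by nlinarith)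
      rw [mul_neg, Real.sin_neg] at this; linarith
    rw [abs_of_nonpos this]

lemma two_abs_le_abs_sin (θ : ℝ) : 2 * |θ - round θ| ≤ |Real.sin (π * θ)| := by
  have hy : |θ - round θ| ≤ 1/2 := abs_sub_round θ
  have hpi := Real.pi_pos
  rw [abs_sin_pi_mul]
  have h := Real.mul_le_sin (x := π * |θ - round θ|) (by positivity) (by nlinarith)
  calc 2 * |θ - round θ| = 2/π * (π * |θ - round θ|) := by field_simp
    _ ≤ _ := h

lemma round_eq_of_sin_eq_zero {θ : ℝ} (h : Real.sin (π * θ) = 0) : θ - round θ = 0 := by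
  rw [Real.sin_eq_zero_iff] at h
  obtain ⟨n, hn⟩ := h
  have hpi := Real.pi_ne_zero
  have : θ = n := by
    have : (n:ℝ) * π = θ * π := by rw [hn]; ring
    exact (mul_right_cancel₀ hpi this).symm
  rw [this, round_intCast, sub_self]


lemma harmonic_le : ∀ N : ℕ, ∑ i ∈ range N, (1:ℝ)/(i+1) ≤ 1 + Real.log N := by
  intro N
  induction N with
  | zero => simp
  | succ N ih =>
    rcases Nat.eq_zero_or_pos N with rfl | hN
    · simp
    · rw [Finset.sum_range_succ]
      have hN' : (0:ℝ) < N := by exact_mod_cast hN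
      have key : (1:ℝ)/(N+1) ≤ Real.log (N+1) - Real.log N := by
        have h := Real.log_le_sub_one_of_pos (x := (N:ℝ)/(N+1)) (by positivity)
        rw [Real.log_div (by positivity) (by positivity)] at h
        have : (N:ℝ)/(N+1) - 1 = -(1/(N+1)) := by field_simp; ring
        rw [this] at h; linarith
      push_cast
      linarith

lemma gcd_sum_le (A m : ℕ) (hm : 1 ≤ m) :
    ∑ a ∈ Icc 1 A, Nat.gcd a m ≤ A * m.divisors.card := by
  have hmaps : ∀ a ∈ Icc 1 A, Nat.gcd a m ∈ m.divisors := by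
    intro a _
    exact Nat.mem_divisors.mpr ⟨Nat.gcd_dvd_right a m, by omega⟩
  rw [← Finset.sum_fiberwise_of_maps_to hmaps]
  calc ∑ e ∈ m.divisors, ∑ a ∈ (Icc 1 A).filter (fun a => Nat.gcd a m = e), Nat.gcd a m
      ≤ ∑ e ∈ m.divisors, A := by
        apply Finset.sum_le_sum
        intro e he
        have hsub : (Icc 1 A).filter (fun a => Nat.gcd a m = e) ⊆ (Icc 1 A).filter (fun a => e ∣ a) := by
          intro a ha
          rw [Finset.mem_filter] at ha ⊢
          exact ⟨ha.1, ha.2 ▸ Nat.gcd_dvd_left a m⟩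
        have hcard : ((Icc 1 A).filter (fun a => e ∣ a)).card = A / e := by
          have : Icc 1 A = Ioc 0 A := rfl
          rw [this, Nat.Ioc_filter_dvd_card_eq_div]
        calc ∑ a ∈ (Icc 1 A).filter (fun a => Nat.gcd a m = e), Nat.gcd a m
            = ∑ a ∈ (Icc 1 A).filter (fun a => Nat.gcd a m = e), e := by
              apply Finset.sum_congr rfl
              intro a ha
              exact (Finset.mem_filter.mp ha).2
          _ = ((Icc 1 A).filter (fun a => Nat.gcd a m = e)).card * e := by
              rw [Finset.sum_const, smul_eq_mul]
          _ ≤ (A / e) * e := by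
              rw [← hcard]
              exact Nat.mul_le_mul_right e (Finset.card_le_card hsub)
          _ ≤ A := Nat.div_mul_le_self A e
    _ = A * m.divisors.card := by rw [Finset.sum_const, smul_eq_mul, mul_comm]


lemma innerSumBound (m a : ℕ) (hm : 1 ≤ m) (ha : 1 ≤ a) (b U : ℝ) (hU : 0 < U) :
    ∑ n ∈ Finset.range m, sinBound U (Real.pi * ((a * n + b) / m)) ≤
      4 * (Nat.gcd a m) * U + 2 * m * (1 + Real.log m) := by
  classical
  set d := Nat.gcd a m with hd
  have hd0 : 0 < d := Nat.gcd_pos_of_pos_right a hm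
  set m' := m / d with hm'def
  have hdm : d ∣ m := Nat.gcd_dvd_right a m
  have hm'0 : 0 < m' := Nat.div_pos (Nat.le_of_dvd hm hdm) hd0
  have hdm' : d * m' = m := Nat.mul_div_cancel' hdm
  set θ : ℕ → ℝ := fun n => ((a:ℝ) * n + b) / m with hθ
  set u : ℕ → ℝ := fun n => θ n - round (θ n) with hu
  set skey : ℕ → ℤ := fun n => ⌈(2 * (m':ℝ)) * u n⌉ with hskey
  set key : ℕ → ℕ := fun n => (skey n).natAbs with hkey
  set G : ℕ → ℝ := fun j => if j ≤ 1 then U else (m' : ℝ) / ((j:ℝ) - 1) with hG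
  have hmR : (0:ℝ) < m := by exact_mod_cast hm
  have hm'R : (0:ℝ) < m' := by exact_mod_cast hm'0
  have hdR : (0:ℝ) < d := by exact_mod_cast hd0
  have huabs : ∀ n, |u n| ≤ 1/2 := fun n => abs_sub_round (θ n)
  -- fiber bound for signed keys
  have fiber : ∀ c : ℤ, ((range m).filter (fun n => skey n = c)).card ≤ d := by
    intro c
    have hcard : ((range m).filter (fun n => skey n = c)).card ≤ (range d).card := by
      apply Finset.card_le_card_of_injOn (fun n => n / m')
      · intro n hn
        rw [Finset.mem_coe, mem_filter, mem_range] at hn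
        rw [Finset.mem_coe, mem_range]
        exact Nat.div_lt_of_lt_mul (by rw [mul_comm, hdm']; exact hn.1)
      · intro n hn n' hn' hdiv
        simp only [Finset.coe_filter, Set.mem_setOf_eq, mem_range] at hn hn'
        have hdiv' : n / m' = n' / m' := hdiv
        have hx1 : (2 * (m':ℝ)) * u n ≤ c := by
          have h := Int.le_ceil ((2 * (m':ℝ)) * u n)
          rw [show ⌈(2 * (m':ℝ)) * u n⌉ = skey n from rfl, hn.2] at h
          exact_mod_cast h
        have hx2 : (c:ℝ) - 1 < (2 * (m':ℝ)) * u n := by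
          have h := Int.ceil_lt_add_one ((2 * (m':ℝ)) * u n)
          rw [show ⌈(2 * (m':ℝ)) * u n⌉ = skey n from rfl, hn.2] at h
          have h' : (c:ℝ) < (2 * (m':ℝ)) * u n + 1 := by exact_mod_cast h
          linarith
        have hx1' : (2 * (m':ℝ)) * u n' ≤ c := by
          have h := Int.le_ceil ((2 * (m':ℝ)) * u n')
          rw [show ⌈(2 * (m':ℝ)) * u n'⌉ = skey n' from rfl, hn'.2] at h
          exact_mod_cast h
        have hx2' : (c:ℝ) - 1 < (2 * (m':ℝ)) * u n' := by
          have h := Int.ceil_lt_add_one ((2 * (m':ℝ)) * u n')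
          rw [show ⌈(2 * (m':ℝ)) * u n'⌉ = skey n' from rfl, hn'.2] at h
          have h' : (c:ℝ) < (2 * (m':ℝ)) * u n' + 1 := by exact_mod_cast h
          linarith
        have hdiff : 2 * (m':ℝ) * |u n - u n'| < 1 := by
          rcases abs_cases (u n - u n') with ⟨hh, _⟩ | ⟨hh, _⟩ <;> rw [hh] <;> nlinarith
        set N : ℤ := (a:ℤ) * n - (a:ℤ) * n' - (m:ℤ) * (round (θ n) - round (θ n')) with hN
        have hNR : (N:ℝ) = m * (u n - u n') := by
          rw [hN]
          push_cast
          rw [hu]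
          simp only [hθ]
          field_simp
          ring
        have hNabs : |N| < (d:ℤ) := by
          have hcalc : |(N:ℝ)| < d := by
            rw [hNR, abs_mul, abs_of_pos hmR]
            have hmm : (m:ℝ) = d * m' := by exact_mod_cast hdm'.symm
            nlinarith [abs_nonneg (u n - u n')]
          have : |(N:ℝ)| = ((|N| : ℤ) : ℝ) := by push_cast; rfl
          rw [this] at hcalc
          exact_mod_cast hcalc
        have hNdvd : (d:ℤ) ∣ N := by
          rw [hN]
          have h1 : (d:ℤ) ∣ (a:ℤ) := Int.natCast_dvd_natCast.mpr (Nat.gcd_dvd_left a m)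
          have h2 : (d:ℤ) ∣ (m:ℤ) := Int.natCast_dvd_natCast.mpr hdm
          exact dvd_sub (dvd_sub (h1.mul_right _) (h1.mul_right _)) (h2.mul_right _)
        have hN0 : N = 0 := Int.eq_zero_of_abs_lt_dvd hNdvd hNabs
        have hmdvd : (m:ℤ) ∣ (a:ℤ) * ((n:ℤ) - n') := by
          refine ⟨round (θ n) - round (θ n'), ?_⟩
          have h := hN0
          rw [hN] at h
          linear_combination h
        have hm'dvd : (m':ℤ) ∣ ((n:ℤ) - n') := by
          set a' := a / d with ha'
          have haa : d * a' = a := Nat.mul_div_cancel' (Nat.gcd_dvd_left a m)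
          have hcop : Nat.Coprime a' m' := Nat.coprime_div_gcd_div_gcd hd0
          have step : ((d:ℤ) * m') ∣ ((d:ℤ) * ((a':ℤ) * ((n:ℤ) - n'))) := by
            have e1 : ((d:ℤ) * m') = (m:ℤ) := by exact_mod_cast hdm'
            have e2 : ((d:ℤ) * ((a':ℤ) * ((n:ℤ) - n'))) = (a:ℤ) * ((n:ℤ) - n') := by
              rw [← mul_assoc]
              congr 1
              exact_mod_cast haa
            rw [e1, e2]
            exact hmdvd
          have step2 : (m':ℤ) ∣ (a':ℤ) * ((n:ℤ) - n') :=
            (mul_dvd_mul_iff_left (by exact_mod_cast hd0.ne' : (d:ℤ) ≠ 0)).mp step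
          have hcopZ : IsCoprime (m':ℤ) (a':ℤ) := Nat.isCoprime_iff_coprime.mpr hcop.symm
          exact hcopZ.dvd_of_dvd_mul_left step2
        have hmodZ : (n':ℤ) % (m':ℤ) = (n:ℤ) % (m':ℤ) :=
          Int.modEq_iff_dvd.mpr hm'dvd
        have hmod : n % m' = n' % m' := by exact_mod_cast hmodZ.symm
        have h1 := Nat.div_add_mod n m'
        have h2 := Nat.div_add_mod n' m'
        calc n = m' * (n / m') + n % m' := h1.symm
          _ = m' * (n' / m') + n' % m' := by rw [hdiv', hmod]
          _ = n' := h2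
    simpa using hcard
  -- keys are small
  have keyle : ∀ n, key n ≤ m' := by
    intro n
    have h1 : (2 * (m':ℝ)) * u n ≤ m' := by
      calc (2 * (m':ℝ)) * u n ≤ (2 * (m':ℝ)) * (1/2) :=
            mul_le_mul_of_nonneg_left (abs_le.mp (huabs n)).2 (by positivity)
        _ = m' := by ring
    have h2 : -(m':ℝ) ≤ (2 * (m':ℝ)) * u n := by
      calc -(m':ℝ) = (2 * (m':ℝ)) * (-(1/2)) := by ring
        _ ≤ (2 * (m':ℝ)) * u n :=
            mul_le_mul_of_nonneg_left (by linarith [(abs_le.mp (huabs n)).1]) (by positivity)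
    have hub : skey n ≤ (m' : ℤ) := by
      rw [hskey]
      exact Int.ceil_le.mpr (by exact_mod_cast h1)
    have hlb : -(m' : ℤ) ≤ skey n := by
      have := Int.le_ceil ((2 * (m':ℝ)) * u n)
      have h3 : (-(m':ℝ)) ≤ ((skey n : ℤ) : ℝ) := le_trans h2 this
      exact_mod_cast h3
    show (skey n).natAbs ≤ m'
    omega
  -- pointwise bound
  have point : ∀ n, sinBound U (π * θ n) ≤ G (key n) := by
    intro n
    by_cases hj : key n ≤ 1
    · rw [hG]
      simp only [hj, if_pos]
      exact sinBound_le _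
    · push_neg at hj
      have hj2 : 2 ≤ key n := hj
      have habs : ((key n : ℝ) - 1) ≤ |(2 * (m':ℝ)) * u n| := by
        rcases le_or_gt 0 (skey n) with hpos | hneg
        · have hkk : ((key n : ℤ)) = skey n := Int.natAbs_of_nonneg hpos
          have hks : ((key n : ℝ)) = ((skey n : ℝ)) := by exact_mod_cast hkk
          have h2 := Int.ceil_lt_add_one ((2 * (m':ℝ)) * u n)
          rw [show ⌈(2 * (m':ℝ)) * u n⌉ = skey n from rfl] at h2
          have h2' : ((skey n : ℝ)) < (2 * (m':ℝ)) * u n + 1 := by exact_mod_cast h2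
          have hk2 : (2:ℝ) ≤ ((key n : ℝ)) := by exact_mod_cast hj2
          have hpos2 : (0:ℝ) < (2 * (m':ℝ)) * u n := by
            rw [hks] at hk2; linarith
          rw [abs_of_pos hpos2]
          linarith [hks ▸ h2']
        · have hkk : ((key n : ℤ)) = -skey n := by
            have h0 : key n = (skey n).natAbs := rfl
            rw [h0, Int.ofNat_natAbs_of_nonpos hneg.le]
          have hks : ((key n : ℝ)) = -((skey n : ℝ)) := by exact_mod_cast hkk
          have h1 := Int.le_ceil ((2 * (m':ℝ)) * u n)
          rw [show ⌈(2 * (m':ℝ)) * u n⌉ = skey n from rfl] at h1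
          have hs1 : ((skey n : ℝ)) < 0 := by exact_mod_cast hneg
          have hneg2 : (2 * (m':ℝ)) * u n < 0 := lt_of_le_of_lt h1 hs1
          rw [abs_of_neg hneg2]
          have hk2 : (2:ℝ) ≤ ((key n : ℝ)) := by exact_mod_cast hj2
          linarith
      have hkeyR : (1:ℝ) ≤ (key n : ℝ) - 1 := by
        have : (2:ℝ) ≤ (key n : ℝ) := by exact_mod_cast hj2
        linarith
      have huabs2 : ((key n : ℝ) - 1) / (2 * (m':ℝ)) ≤ |u n| := by
        rw [div_le_iff₀ (by positivity)]
        calc ((key n : ℝ) - 1) ≤ |(2 * (m':ℝ)) * u n| := habs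
          _ = |u n| * (2 * (m':ℝ)) := by
              rw [abs_mul, abs_of_pos (by positivity : (0:ℝ) < 2 * (m':ℝ))]; ring
      have hupos : 0 < |u n| := lt_of_lt_of_le (by positivity) huabs2
      have hsin : Real.sin (π * θ n) ≠ 0 := by
        intro h0
        have hz : u n = 0 := round_eq_of_sin_eq_zero h0
        rw [hz] at hupos
        simp at hupos
      have hsinlb : ((key n : ℝ) - 1) / (m':ℝ) ≤ |Real.sin (π * θ n)| := by
        calc ((key n : ℝ) - 1) / (m':ℝ) = 2 * (((key n : ℝ) - 1) / (2 * (m':ℝ))) := by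
              field_simp
          _ ≤ 2 * |u n| := by linarith
          _ ≤ |Real.sin (π * θ n)| := two_abs_le_abs_sin (θ n)
      have hGval : G (key n) = (m' : ℝ) / ((key n : ℝ) - 1) := by
        rw [hG]
        simp only [if_neg (by omega : ¬ key n ≤ 1)]
      rw [hGval]
      unfold sinBound
      rw [if_neg hsin]
      refine le_trans (min_le_right _ _) ?_
      have h5 : |Real.sin (π * θ n)|⁻¹ ≤ (((key n:ℝ) - 1)/(m':ℝ))⁻¹ :=
        inv_anti₀ (by positivity) hsinlb
      rw [inv_div] at h5
      exact h5
  -- assemble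
  have chain : ∑ n ∈ range m, sinBound U (π * θ n) ≤ ∑ n ∈ range m, G (key n) :=
    Finset.sum_le_sum (fun n _ => point n)
  have maps : ∀ n ∈ range m, key n ∈ range (m'+1) := fun n _ =>
    mem_range.mpr (by have := keyle n; omega)
  have Gnn : ∀ j, 0 ≤ G j := by
    intro j
    rw [hG]
    dsimp only
    split
    · exact hU.le
    · apply div_nonneg hm'R.le
      have h2j : 2 ≤ j := by omega
      have h2j' : (2:ℝ) ≤ (j:ℝ) := by exact_mod_cast h2j
      linarith
  have fibsum : ∑ n ∈ range m, G (key n) ≤ ∑ j ∈ range (m'+1), (2*(d:ℝ)) * G j := by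
    rw [← Finset.sum_fiberwise_of_maps_to maps (fun n => G (key n))]
    apply Finset.sum_le_sum
    intro j hj
    have hsub : (range m).filter (fun n => key n = j) ⊆
        ((range m).filter (fun n => skey n = (j:ℤ))) ∪
          ((range m).filter (fun n => skey n = -(j:ℤ))) := by
      intro n hn
      rw [mem_filter] at hn
      rw [Finset.mem_union, mem_filter, mem_filter]
      have hnat : (skey n).natAbs = j := hn.2
      rcases Int.natAbs_eq (skey n) with h | h
      · left; exact ⟨hn.1, by omega⟩
      · right; exact ⟨hn.1, by omega⟩
    have hcard : ((range m).filter (fun n => key n = j)).card ≤ 2 * d := by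
      calc ((range m).filter (fun n => key n = j)).card
          ≤ (((range m).filter (fun n => skey n = (j:ℤ))) ∪
              ((range m).filter (fun n => skey n = -(j:ℤ)))).card :=
            Finset.card_le_card hsub
        _ ≤ ((range m).filter (fun n => skey n = (j:ℤ))).card +
              ((range m).filter (fun n => skey n = -(j:ℤ))).card :=
            Finset.card_union_le _ _
        _ ≤ d + d := add_le_add (fiber _) (fiber _)
        _ = 2*d := by ring
    calc ∑ n ∈ (range m).filter (fun n => key n = j), G (key n)
        = ∑ n ∈ (range m).filter (fun n => key n = j), G j := by
          apply Finset.sum_congr rfl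
          intro n hn
          rw [(mem_filter.mp hn).2]
      _ = (((range m).filter (fun n => key n = j)).card : ℝ) * G j := by
          rw [Finset.sum_const, nsmul_eq_mul]
      _ ≤ (2*(d:ℝ)) * G j := by
          apply mul_le_mul_of_nonneg_right _ (Gnn j)
          exact_mod_cast hcard
  have Gsum : ∑ j ∈ range (m'+1), G j ≤ 2*U + (m':ℝ) * (1 + Real.log m') := by
    have hsplit : (∑ j ∈ Ico 0 2, G j) + ∑ j ∈ Ico 2 (m'+1), G j = ∑ j ∈ Ico 0 (m'+1), G j :=
      Finset.sum_Ico_consecutive G (by omega) (by omega)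
    have h02 : ∑ j ∈ Ico 0 2, G j = 2*U := by
      rw [← Finset.range_eq_Ico]
      rw [Finset.sum_range_succ, Finset.sum_range_one, hG]
      norm_num
      ring
    have htail : ∑ j ∈ Ico 2 (m'+1), G j ≤ (m':ℝ) * (1 + Real.log m') := by
      rw [Finset.sum_Ico_eq_sum_range]
      have hval : ∀ i, G (2 + i) = (m':ℝ) / ((i:ℝ)+1) := by
        intro i
        rw [hG]
        simp only [if_neg (by omega : ¬ (2 + i ≤ 1))]
        congr 1
        push_cast
        ring
      calc ∑ i ∈ range (m'+1-2), G (2+i) = ∑ i ∈ range (m'-1), (m':ℝ) / ((i:ℝ)+1) := by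
            have hre : m'+1-2 = m'-1 := by omega
            rw [hre]
            exact Finset.sum_congr rfl (fun i _ => hval i)
        _ = (m':ℝ) * ∑ i ∈ range (m'-1), 1/((i:ℝ)+1) := by
            rw [Finset.mul_sum]
            apply Finset.sum_congr rfl
            intro i _
            rw [mul_one_div]
        _ ≤ (m':ℝ) * (1 + Real.log (m'-1:ℕ)) := by
            apply mul_le_mul_of_nonneg_left (harmonic_le (m'-1)) hm'R.le
        _ ≤ (m':ℝ) * (1 + Real.log m') := by
            apply mul_le_mul_of_nonneg_left _ hm'R.le
            have hlog : Real.log ((m'-1:ℕ):ℝ) ≤ Real.log m' := by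
              rcases Nat.eq_zero_or_pos (m'-1) with h0 | hp
              · rw [h0]
                simp only [Nat.cast_zero, Real.log_zero]
                exact Real.log_nonneg (by exact_mod_cast hm'0)
              · apply Real.log_le_log (by exact_mod_cast hp)
                exact_mod_cast Nat.sub_le m' 1
            linarith
    rw [Finset.range_eq_Ico]
    linarith [hsplit, h02, htail]
  have hlogm : Real.log m' ≤ Real.log m := by
    apply Real.log_le_log hm'R
    exact_mod_cast Nat.div_le_self m d
  calc ∑ n ∈ range m, sinBound U (π * θ n) ≤ ∑ n ∈ range m, G (key n) := chain
    _ ≤ ∑ j ∈ range (m'+1), (2*(d:ℝ)) * G j := fibsum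
    _ = (2*(d:ℝ)) * ∑ j ∈ range (m'+1), G j := by rw [Finset.mul_sum]
    _ ≤ (2*(d:ℝ)) * (2*U + (m':ℝ) * (1 + Real.log m')) := by
        apply mul_le_mul_of_nonneg_left Gsum (by positivity)
    _ = 4 * (d:ℝ) * U + 2 * ((d:ℝ)*(m':ℝ)) * (1 + Real.log m') := by ring
    _ = 4 * (d:ℝ) * U + 2 * (m:ℝ) * (1 + Real.log m') := by
        have : (d:ℝ) * (m':ℝ) = m := by exact_mod_cast hdm'
        rw [this]
    _ ≤ 4 * (d:ℝ) * U + 2 * (m:ℝ) * (1 + Real.log m) := by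
        have : (0:ℝ) ≤ 2 * (m:ℝ) := by positivity
        nlinarith [hlogm]
set_option maxHeartbeats 1000000 in
/-- Averaged double sum bound with divisor function; the implied constant is absolute. -/
theorem stmt13 :
    ∃ C : ℝ, 0 < C ∧ ∀ m A : ℕ, 1 ≤ m → 1 ≤ A → ∀ b U : ℝ, 0 < U →
      (1 / (A : ℝ)) * ∑ a ∈ Finset.Icc 1 A, ∑ n ∈ Finset.range m,
          sinBound U (Real.pi * ((a * n + b) / m)) ≤
        C * ((m.divisors.card : ℝ) * U + m * Real.log m) := by
  refine ⟨6, by norm_num, ?_⟩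
  intro m A hm hA b U hU
  have hAR : (0:ℝ) < A := by exact_mod_cast hA
  have hcardIcc : (Finset.Icc 1 A).card = A := by
    rw [Nat.card_Icc]
    omega
  have htau1 : 1 ≤ m.divisors.card := by
    have : m ∈ m.divisors := Nat.mem_divisors_self m (by omega)
    exact Finset.card_pos.mpr ⟨m, this⟩
  have htauR : (1:ℝ) ≤ (m.divisors.card : ℝ) := by exact_mod_cast htau1
  rcases eq_or_lt_of_le hm with hm1 | hm2
  · -- m = 1
    subst hm1
    have hb : ∑ a ∈ Finset.Icc 1 A, ∑ n ∈ Finset.range 1,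
        sinBound U (Real.pi * ((a * n + b) / (1:ℕ))) ≤ ∑ a ∈ Finset.Icc 1 A, U := by
      apply Finset.sum_le_sum
      intro a _
      rw [Finset.sum_range_one]
      exact sinBound_le _
    rw [Finset.sum_const, hcardIcc, nsmul_eq_mul] at hb
    have h1 : (1 / (A:ℝ)) * ∑ a ∈ Finset.Icc 1 A, ∑ n ∈ Finset.range 1,
        sinBound U (Real.pi * ((a * n + b) / (1:ℕ))) ≤ (1/(A:ℝ)) * ((A:ℝ) * U) := by
      apply mul_le_mul_of_nonneg_left hb (by positivity)
    have h2 : (1/(A:ℝ)) * ((A:ℝ) * U) = U := by field_simp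
    refine le_trans (le_trans h1 (le_of_eq h2)) ?_
    simp only [Nat.divisors_one, Finset.card_singleton, Nat.cast_one, Real.log_one]
    norm_num
    linarith
  · -- 2 ≤ m
    have hm2' : 2 ≤ m := hm2
    have hmR : (0:ℝ) < m := by exact_mod_cast hm
    have hinner : ∀ a ∈ Finset.Icc 1 A, ∑ n ∈ Finset.range m,
        sinBound U (Real.pi * ((a * n + b) / m)) ≤
          4 * (Nat.gcd a m : ℝ) * U + 2 * m * (1 + Real.log m) := by
      intro a ha'
      exact innerSumBound m a hm (Finset.mem_Icc.mp ha').1 b U hU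
    have hsum1 : ∑ a ∈ Finset.Icc 1 A, ∑ n ∈ Finset.range m,
        sinBound U (Real.pi * ((a * n + b) / m)) ≤
        ∑ a ∈ Finset.Icc 1 A, (4 * (Nat.gcd a m : ℝ) * U + 2 * m * (1 + Real.log m)) :=
      Finset.sum_le_sum hinner
    have hgcd : (∑ a ∈ Finset.Icc 1 A, (Nat.gcd a m : ℝ)) ≤ (A:ℝ) * (m.divisors.card : ℝ) := by
      have := gcd_sum_le A m hm
      have h := (Nat.cast_le (α := ℝ)).mpr this
      push_cast at h
      exact h
    have hsum2 : ∑ a ∈ Finset.Icc 1 A, (4 * (Nat.gcd a m : ℝ) * U + 2 * m * (1 + Real.log m))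
        = 4 * U * (∑ a ∈ Finset.Icc 1 A, (Nat.gcd a m : ℝ)) + (A:ℝ) * (2 * m * (1 + Real.log m)) := by
      rw [Finset.sum_add_distrib, Finset.sum_const, hcardIcc, nsmul_eq_mul]
      congr 1
      rw [Finset.mul_sum]
      exact Finset.sum_congr rfl (fun a _ => by ring)
    have hlog2 : (1:ℝ)/2 ≤ Real.log m := by
      have h2m : Real.log 2 ≤ Real.log m := by
        apply Real.log_le_log (by norm_num)
        exact_mod_cast hm2'
      have := Real.log_two_gt_d9
      linarith
    have hlognn : (0:ℝ) ≤ Real.log m := by linarith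
    calc (1 / (A:ℝ)) * ∑ a ∈ Finset.Icc 1 A, ∑ n ∈ Finset.range m,
          sinBound U (Real.pi * ((a * n + b) / m))
        ≤ (1 / (A:ℝ)) * (4 * U * (∑ a ∈ Finset.Icc 1 A, (Nat.gcd a m : ℝ)) +
            (A:ℝ) * (2 * m * (1 + Real.log m))) := by
          apply mul_le_mul_of_nonneg_left _ (by positivity)
          rw [← hsum2]
          exact hsum1
      _ ≤ (1 / (A:ℝ)) * (4 * U * ((A:ℝ) * (m.divisors.card : ℝ)) +
            (A:ℝ) * (2 * m * (1 + Real.log m))) := by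
          apply mul_le_mul_of_nonneg_left _ (by positivity)
          have : 4 * U * (∑ a ∈ Finset.Icc 1 A, (Nat.gcd a m : ℝ)) ≤
              4 * U * ((A:ℝ) * (m.divisors.card : ℝ)) := by
            apply mul_le_mul_of_nonneg_left hgcd (by positivity)
          linarith
      _ = 4 * U * (m.divisors.card : ℝ) + 2 * m * (1 + Real.log m) := by
          field_simp
      _ ≤ 6 * ((m.divisors.card : ℝ) * U + m * Real.log m) := by
          have h1 : 2 * (m:ℝ) * (1 + Real.log m) ≤ 6 * ((m:ℝ) * Real.log m) := by
            nlinarith [hlog2, hmR]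
          nlinarith [hU.le, htauR]
end

section
/- Let ν, λ, ρ be nonnegative integers with ν + ρ ≤ λ ≤ 2ν, and let 0 ≤ r ≤ q^ρ. Then the number of integers n < q^ν for which there exists j ≥ λ with ε_j((n+r)²) ≠ ε_j(n²) is O(q^{2ν+ρ-λ}), where ε_j denotes the j-th digit in base q and the implied constant depends only on q. -/
/-- Carry lemma: the number of `n < q^ν` for which some digit of index `j ≥ λ`
of `(n+r)²` and `n²` (in base `q`) differ is `O(q^{2ν+ρ-λ})`, the implied constant
depending only on `q`. -/
theorem stmt16 (q : ℕ) (hq : 2 ≤ q) :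
    ∃ C : ℝ, 0 < C ∧ ∀ ν lam ρ r : ℕ, ν + ρ ≤ lam → lam ≤ 2 * ν → r ≤ q ^ ρ →
      (Set.ncard {n : ℕ | n < q ^ ν ∧
          ∃ j : ℕ, lam ≤ j ∧ (n + r) ^ 2 / q ^ j % q ≠ n ^ 2 / q ^ j % q} : ℝ) ≤
        C * (q : ℝ) ^ (2 * ν + ρ - lam) := by
  refine ⟨4, by norm_num, ?_⟩
  intro ν lam ρ r h1 h2 h3
  have hq0 : 0 < q := by omega
  have hX0 : 0 < q ^ lam := pow_pos hq0 lam
  set s : ℕ → ℕ := fun m => Nat.sqrt (m * q ^ lam - 1) + 1 with hs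
  set M := 4 * q ^ (2 * ν - lam) with hM
  set T : Finset ℕ := (Finset.Icc 1 M).biUnion (fun m => Finset.Ico (s m - r) (s m)) with hT
  have hsub : {n : ℕ | n < q ^ ν ∧
      ∃ j : ℕ, lam ≤ j ∧ (n + r) ^ 2 / q ^ j % q ≠ n ^ 2 / q ^ j % q} ⊆ ↑T := by
    rintro n ⟨hn, j, hj, hne⟩
    have hdiff : (n + r) ^ 2 / q ^ lam ≠ n ^ 2 / q ^ lam := by
      intro h
      apply hne
      have e1 : (n + r) ^ 2 / q ^ j = ((n + r) ^ 2 / q ^ lam) / q ^ (j - lam) := by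
        rw [Nat.div_div_eq_div_mul, ← pow_add]
        congr 2; omega
      have e2 : n ^ 2 / q ^ j = (n ^ 2 / q ^ lam) / q ^ (j - lam) := by
        rw [Nat.div_div_eq_div_mul, ← pow_add]
        congr 2; omega
      rw [e1, e2, h]
    set m := (n + r) ^ 2 / q ^ lam with hm
    have hle : n ^ 2 ≤ (n + r) ^ 2 := by nlinarith
    have hlt : n ^ 2 / q ^ lam < m :=
      lt_of_le_of_ne (Nat.div_le_div_right hle) (Ne.symm hdiff)
    have hm1 : 1 ≤ m := Nat.lt_of_le_of_lt (Nat.zero_le _) hlt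
    have hmu : m * q ^ lam ≤ (n + r) ^ 2 := Nat.div_mul_le_self _ _
    have hnlt : n ^ 2 < m * q ^ lam := (Nat.div_lt_iff_lt_mul hX0).mp hlt
    -- m ≤ M
    have hnr : n + r ≤ 2 * q ^ ν := by
      have hρν : ρ ≤ ν := by omega
      have : q ^ ρ ≤ q ^ ν := Nat.pow_le_pow_right hq0 hρν
      omega
    have hbound : m * q ^ lam ≤ M * q ^ lam := by
      calc m * q ^ lam ≤ (n + r) ^ 2 := hmu
        _ ≤ (2 * q ^ ν) ^ 2 := Nat.pow_le_pow_left hnr 2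
        _ = 4 * (q ^ ν * q ^ ν) := by ring
        _ = M * q ^ lam := by
            rw [hM, ← pow_add, mul_assoc, ← pow_add]
            congr 2
            omega
    have hmM : m ≤ M := Nat.le_of_mul_le_mul_right hbound hX0
    have hmem : n ∈ Finset.Ico (s m - r) (s m) := by
      have h1' : n ≤ Nat.sqrt (m * q ^ lam - 1) := by
        rw [Nat.le_sqrt]
        have : n ^ 2 ≤ m * q ^ lam - 1 := by omega
        nlinarith [this]
      have h2' : Nat.sqrt (m * q ^ lam - 1) < n + r := by
        rw [Nat.sqrt_lt']
        have : m * q ^ lam ≤ (n + r) * (n + r) := by nlinarith [hmu]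
        omega
      simp only [Finset.mem_Ico, hs]
      omega
    exact Finset.mem_coe.mpr (Finset.mem_biUnion.mpr ⟨m, Finset.mem_Icc.mpr ⟨hm1, hmM⟩, hmem⟩)
  have hcard : T.card ≤ 4 * q ^ (2 * ν + ρ - lam) := by
    calc T.card ≤ ∑ m ∈ Finset.Icc 1 M, (Finset.Ico (s m - r) (s m)).card :=
          Finset.card_biUnion_le
      _ ≤ ∑ m ∈ Finset.Icc 1 M, r := by
          apply Finset.sum_le_sum
          intro m _
          rw [Nat.card_Ico]
          omega
      _ = M * r := by rw [Finset.sum_const, Nat.card_Icc, smul_eq_mul, Nat.add_sub_cancel]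
      _ ≤ M * q ^ ρ := Nat.mul_le_mul_left _ h3
      _ = 4 * q ^ (2 * ν + ρ - lam) := by
          rw [hM, mul_assoc, ← pow_add]
          congr 2
          omega
  have hfin : (↑T : Set ℕ).Finite := T.finite_toSet
  have hncard : Set.ncard {n : ℕ | n < q ^ ν ∧
      ∃ j : ℕ, lam ≤ j ∧ (n + r) ^ 2 / q ^ j % q ≠ n ^ 2 / q ^ j % q} ≤ T.card := by
    have := Set.ncard_le_ncard hsub hfin
    rwa [Set.ncard_coe_finset] at this
  have : (Set.ncard {n : ℕ | n < q ^ ν ∧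
      ∃ j : ℕ, lam ≤ j ∧ (n + r) ^ 2 / q ^ j % q ≠ n ^ 2 / q ^ j % q} : ℝ)
      ≤ (4 * q ^ (2 * ν + ρ - lam) : ℕ) := by
    exact_mod_cast le_trans hncard hcard
  calc _ ≤ ((4 * q ^ (2 * ν + ρ - lam) : ℕ) : ℝ) := this
    _ = 4 * (q : ℝ) ^ (2 * ν + ρ - lam) := by push_cast; ring
end

section
/- Let q ≥ 2, k ≥ 1, m ≥ 1, and let I_k denote the set of integer vectors I = (i_0,...,i_{k-1}) with i_0 < q^{m-1} and i_{ℓ-1} ≤ i_ℓ ≤ i_{ℓ-1} + q^{m-1} for 1 ≤ ℓ ≤ k-1. For j ≥ 1 and ε, δ ∈ {0,...,q^j - 1}, define T^j_{ε,δ}(I) = (⌊(i_ℓ + q^{m-1}(ε + ℓδ))/q^j⌋)_{ℓ<k}. Then: (a) T^j_{ε,δ}(I) ∈ I_k; (b) T^{j_2}_{ε_2,δ_2} ∘ T^{j_1}_{ε_1,δ_1} = T^{j_1+j_2}_{ε_2 q^{j_1}+ε_1, δ_2 q^{j_1}+δ_1} for ε_i, δ_i ∈ {0,...,q^{j_i}-1}.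 -/
/-- Membership in the set `I_k`: `i_0 < q^(m-1)` and
`i_{ℓ-1} ≤ i_ℓ ≤ i_{ℓ-1} + q^(m-1)` for `1 ≤ ℓ ≤ k-1`. -/
def memIk (q m k : ℕ) (i : Fin k → ℕ) : Prop :=
  (∀ h : 0 < k, i ⟨0, h⟩ < q ^ (m - 1)) ∧
  ∀ ℓ : ℕ, ∀ h : ℓ + 1 < k,
    i ⟨ℓ, Nat.lt_of_succ_lt h⟩ ≤ i ⟨ℓ + 1, h⟩ ∧
    i ⟨ℓ + 1, h⟩ ≤ i ⟨ℓ, Nat.lt_of_succ_lt h⟩ + q ^ (m - 1)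

/-- The transformation `T^j_{ε,δ}(I) = (⌊(i_ℓ + q^(m-1)(ε + ℓδ))/q^j⌋)_{ℓ<k}`. -/
def Tmap (q m k j ε δ : ℕ) (i : Fin k → ℕ) : Fin k → ℕ :=
  fun ℓ => (i ℓ + q ^ (m - 1) * (ε + ℓ.val * δ)) / q ^ j

/-- (a) `T^j_{ε,δ}` maps `I_k` to `I_k`; (b) the composition law
`T^{j₂}_{ε₂,δ₂} ∘ T^{j₁}_{ε₁,δ₁} = T^{j₁+j₂}_{ε₂ q^{j₁}+ε₁, δ₂ q^{j₁}+δ₁}`. -/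
theorem stmt19 (q m k : ℕ) (hq : 2 ≤ q) (hm : 1 ≤ m) (hk : 1 ≤ k) :
    (∀ j ε δ : ℕ, 1 ≤ j → ε < q ^ j → δ < q ^ j →
      ∀ i : Fin k → ℕ, memIk q m k i → memIk q m k (Tmap q m k j ε δ i)) ∧
    (∀ j1 j2 ε1 δ1 ε2 δ2 : ℕ, 1 ≤ j1 → 1 ≤ j2 →
      ε1 < q ^ j1 → δ1 < q ^ j1 → ε2 < q ^ j2 → δ2 < q ^ j2 →
      Tmap q m k j2 ε2 δ2 ∘ Tmap q m k j1 ε1 δ1 =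
        Tmap q m k (j1 + j2) (ε2 * q ^ j1 + ε1) (δ2 * q ^ j1 + δ1)) := by
  constructor
  · rintro j ε δ hj hε hδ i ⟨h0, hstep⟩
    have hqj : 0 < q ^ j := pow_pos (by omega) j
    refine ⟨?_, ?_⟩
    · intro h
      have h0' := h0 h
      show (i ⟨0, h⟩ + q ^ (m - 1) * (ε + 0 * δ)) / q ^ j < q ^ (m - 1)
      rw [Nat.div_lt_iff_lt_mul hqj]
      have h1 : q ^ (m - 1) * ε + q ^ (m - 1) ≤ q ^ (m - 1) * q ^ j := by
        calc q ^ (m - 1) * ε + q ^ (m - 1) = q ^ (m - 1) * (ε + 1) := by ring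
          _ ≤ q ^ (m - 1) * q ^ j := Nat.mul_le_mul_left _ hε
      have h2 : ε + 0 * δ = ε := by ring
      rw [h2]
      omega
    · intro ℓ h
      obtain ⟨hle, hub⟩ := hstep ℓ h
      constructor
      · apply Nat.div_le_div_right
        have h3 : q ^ (m - 1) * (ε + ℓ * δ) ≤ q ^ (m - 1) * (ε + (ℓ + 1) * δ) := by
          apply Nat.mul_le_mul_left
          have : ℓ * δ ≤ (ℓ + 1) * δ := Nat.mul_le_mul_right _ (by omega)
          omega
        exact Nat.add_le_add hle h3
      · show (i ⟨ℓ + 1, h⟩ + q ^ (m - 1) * (ε + (ℓ + 1) * δ)) / q ^ j ≤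
          (i ⟨ℓ, Nat.lt_of_succ_lt h⟩ + q ^ (m - 1) * (ε + ℓ * δ)) / q ^ j + q ^ (m - 1)
        have key : i ⟨ℓ + 1, h⟩ + q ^ (m - 1) * (ε + (ℓ + 1) * δ) ≤
            (i ⟨ℓ, Nat.lt_of_succ_lt h⟩ + q ^ (m - 1) * (ε + ℓ * δ)) +
              q ^ (m - 1) * q ^ j := by
          have e1 : q ^ (m - 1) * (ε + (ℓ + 1) * δ) =
              q ^ (m - 1) * (ε + ℓ * δ) + q ^ (m - 1) * δ := by ring
          have e2 : q ^ (m - 1) * δ + q ^ (m - 1) ≤ q ^ (m - 1) * q ^ j := by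
            calc q ^ (m - 1) * δ + q ^ (m - 1) = q ^ (m - 1) * (δ + 1) := by ring
              _ ≤ q ^ (m - 1) * q ^ j := Nat.mul_le_mul_left _ hδ
          omega
        calc (i ⟨ℓ + 1, h⟩ + q ^ (m - 1) * (ε + (ℓ + 1) * δ)) / q ^ j ≤
            ((i ⟨ℓ, Nat.lt_of_succ_lt h⟩ + q ^ (m - 1) * (ε + ℓ * δ)) +
              q ^ (m - 1) * q ^ j) / q ^ j := Nat.div_le_div_right key
          _ = (i ⟨ℓ, Nat.lt_of_succ_lt h⟩ + q ^ (m - 1) * (ε + ℓ * δ)) / q ^ j +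
              q ^ (m - 1) := Nat.add_mul_div_right _ _ hqj
  · intro j1 j2 ε1 δ1 ε2 δ2 _ _ _ _ _ _
    have hq1 : 0 < q ^ j1 := pow_pos (by omega) j1
    funext i ℓ
    simp only [Function.comp, Tmap]
    have e1 : i ℓ + q ^ (m - 1) * (ε2 * q ^ j1 + ε1 + ℓ.val * (δ2 * q ^ j1 + δ1)) =
        (i ℓ + q ^ (m - 1) * (ε1 + ℓ.val * δ1)) +
          q ^ (m - 1) * (ε2 + ℓ.val * δ2) * q ^ j1 := by ring
    rw [e1, pow_add, ← Nat.div_div_eq_div_mul, Nat.add_mul_div_right _ _ hq1]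
end
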